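/- arXiv:2105.02349 — 6 statements merged into one kernel-verified Lean document; each statement's English description precedes it below -/
import Mathlib

section
/- For all t > 0, ∫_0^t K(t-s) W'(s) ds = 1 - b·W(t), where K(t) = c t^{-α}/Γ(1-α); that is, K * W' = 1 - bW on (0,∞). -/
open MeasureTheory Set Filter

lemma aux_gamma_ratio {α : ℝ} (hα : 0 < α) (hα1 : α < 1) {z : ℝ} (hz : 0 < z) :
    z * Real.Gamma z ≤ Real.Gamma (z + α) * (z + α) ^ (1 - α) := by
  have hza : 0 < z + α := by linarith
  have h := Real.Gamma_mul_add_mul_le_rpow_Gamma_mul_rpow_Gamma (s := z + α) (t := z + α + 1)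
      (a := α) (b := 1 - α) hza (by linarith) hα (by linarith) (by ring)
  have he : α * (z + α) + (1 - α) * (z + α + 1) = z + 1 := by ring
  rw [he] at h
  rw [Real.Gamma_add_one hz.ne', Real.Gamma_add_one hza.ne'] at h
  calc z * Real.Gamma z ≤ Real.Gamma (z + α) ^ α * ((z + α) * Real.Gamma (z + α)) ^ (1 - α) := h
    _ = Real.Gamma (z + α) * (z + α) ^ (1 - α) := by
        rw [Real.mul_rpow hza.le (Real.Gamma_pos_of_pos hza).le, ← mul_assoc,
          mul_comm (Real.Gamma (z + α) ^ α), mul_assoc, ← Real.rpow_add (Real.Gamma_pos_of_pos hza)]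
        rw [show α + (1 - α) = 1 by ring, Real.rpow_one, mul_comm]

lemma aux_summable {α : ℝ} (hα : 0 < α) (hα1 : α < 1) {β : ℝ} (hβ : 0 < β) (y : ℝ) :
    Summable fun n : ℕ => y ^ n / Real.Gamma (α * n + β) := by
  apply summable_of_ratio_norm_eventually_le (r := 1/2) (by norm_num)
  have htend : Tendsto (fun n : ℕ => (α * n + β) ^ α) atTop atTop := by
    exact (tendsto_rpow_atTop hα).comp (tendsto_atTop_add_const_right _ _ ((tendsto_natCast_atTop_atTop (R := ℝ)).const_mul_atTop hα))
  have h1 : ∀ᶠ n : ℕ in atTop, (4 * |y| + 1) ≤ (α * n + β) ^ α :=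
    htend.eventually_ge_atTop _
  have h2 : ∀ᶠ n : ℕ in atTop, α ≤ α * n + β := by
    filter_upwards [eventually_ge_atTop 1] with n hn
    have : (1:ℝ) ≤ (n:ℝ) := by exact_mod_cast hn
    nlinarith
  filter_upwards [h1, h2] with n hn1 hn2
  set z : ℝ := α * n + β with hzdef
  have hz : 0 < z := by positivity
  have hza : 0 < z + α := by linarith
  -- key : 2 * |y| * Gamma z ≤ Gamma (z + α)
  have key : 2 * |y| * Real.Gamma z ≤ Real.Gamma (z + α) := by
    have hr := aux_gamma_ratio hα hα1 hz
    have hb1 : (z + α) ^ (1 - α) ≤ 2 * z ^ (1 - α) := by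
      calc (z + α) ^ (1 - α) ≤ (2 * z) ^ (1 - α) := by
            apply Real.rpow_le_rpow hza.le (by linarith) (by linarith)
        _ = 2 ^ (1 - α) * z ^ (1 - α) := Real.mul_rpow (by norm_num) hz.le
        _ ≤ 2 * z ^ (1 - α) := by
            have : (2:ℝ) ^ (1 - α) ≤ 2 ^ (1:ℝ) :=
              Real.rpow_le_rpow_of_exponent_le one_le_two (by linarith)
            rw [Real.rpow_one] at this
            have := Real.rpow_nonneg (x := z) hz.le (1 - α)
            nlinarith
    have hGpos := Real.Gamma_pos_of_pos hza
    have hGzpos := Real.Gamma_pos_of_pos hz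
    have hzrw : z = z ^ α * z ^ (1 - α) := by
      rw [← Real.rpow_add hz, show α + (1 - α) = 1 by ring, Real.rpow_one]
    -- from hr : z * Γ z ≤ Γ(z+α) * (z+α)^(1-α) ≤ Γ(z+α) * 2 * z^(1-α)
    have h3 : z ^ α * z ^ (1 - α) * Real.Gamma z ≤ Real.Gamma (z + α) * (2 * z ^ (1 - α)) := by
      calc z ^ α * z ^ (1 - α) * Real.Gamma z = z * Real.Gamma z := by rw [← hzrw]
        _ ≤ Real.Gamma (z + α) * (z + α) ^ (1 - α) := hr
        _ ≤ Real.Gamma (z + α) * (2 * z ^ (1 - α)) := by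
            apply mul_le_mul_of_nonneg_left hb1 hGpos.le
    have hzp : 0 < z ^ (1 - α) := Real.rpow_pos_of_pos hz _
    have h4 : z ^ α * Real.Gamma z ≤ 2 * Real.Gamma (z + α) := by
      nlinarith
    have h5 : (4 * |y| + 1) * Real.Gamma z ≤ 2 * Real.Gamma (z + α) := by
      have := mul_le_mul_of_nonneg_right hn1 hGzpos.le
      linarith
    nlinarith [abs_nonneg y, hGzpos]
  have hG1 := Real.Gamma_pos_of_pos hz
  have hG2 := Real.Gamma_pos_of_pos hza
  have hcast : α * (n + 1 : ℕ) + β = z + α := by push_cast [hzdef]; ring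
  rw [hcast]
  rw [Real.norm_eq_abs, Real.norm_eq_abs, abs_div, abs_div, abs_pow, abs_pow,
    abs_of_pos hG1, abs_of_pos hG2, pow_succ]
  rw [show (1:ℝ)/2 * (|y| ^ n / Real.Gamma z) = (1/2 * |y| ^ n) / Real.Gamma z by ring]
  rw [div_le_div_iff₀ hG2 hG1]
  nlinarith [key, pow_nonneg (abs_nonneg y) n, hG1, hG2, abs_nonneg y]

lemma aux_beta {u v t : ℝ} (hu : 0 < u) (hv : 0 < v) (ht : 0 < t) :
    ∫ s in (0:ℝ)..t, s ^ (u - 1) * (t - s) ^ (v - 1)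
      = t ^ (u + v - 1) * (Real.Gamma u * Real.Gamma v / Real.Gamma (u + v)) := by
  have hC : ∫ x in (0:ℝ)..t, (x : ℂ) ^ ((u:ℂ) - 1) * ((t : ℂ) - x) ^ ((v:ℂ) - 1) =
      (t : ℂ) ^ ((u:ℂ) + v - 1) * Complex.betaIntegral u v :=
    Complex.betaIntegral_scaled u v ht
  have hβ : Complex.betaIntegral u v = Complex.Gamma u * Complex.Gamma v / Complex.Gamma (u + v) := by
    have h := Complex.Gamma_mul_Gamma_eq_betaIntegral (s := u) (t := v) (by simpa using hu) (by simpa using hv)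
    have hne : Complex.Gamma ((u:ℂ) + v) ≠ 0 := by
      apply Complex.Gamma_ne_zero
      intro m hm
      rw [show ((u:ℂ) + v) = ((u + v : ℝ) : ℂ) by push_cast; ring] at hm
      have h2 : (u + v : ℝ) = -(m:ℝ) := by exact_mod_cast hm
      have := Nat.cast_nonneg (α := ℝ) m
      linarith
    field_simp at h ⊢
    rw [h]
  have hL : ((∫ s in (0:ℝ)..t, s ^ (u - 1) * (t - s) ^ (v - 1) : ℝ) : ℂ)
      = ∫ x in (0:ℝ)..t, (x : ℂ) ^ ((u:ℂ) - 1) * ((t : ℂ) - x) ^ ((v:ℂ) - 1) := by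
    rw [← intervalIntegral.integral_ofReal]
    rw [intervalIntegral.integral_of_le ht.le, intervalIntegral.integral_of_le ht.le]
    apply setIntegral_congr_fun measurableSet_Ioc
    intro x hx
    push_cast
    rw [Complex.ofReal_cpow hx.1.le, Complex.ofReal_cpow (by linarith [hx.2] : (0:ℝ) ≤ t - x)]
    push_cast
    ring
  have hR : ((t ^ (u + v - 1) * (Real.Gamma u * Real.Gamma v / Real.Gamma (u + v)) : ℝ) : ℂ)
      = (t : ℂ) ^ ((u:ℂ) + v - 1) * Complex.betaIntegral u v := by
    rw [hβ, show ((u:ℂ) + v) = ((u + v : ℝ) : ℂ) by push_cast; ring, Complex.Gamma_ofReal,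
      Complex.Gamma_ofReal, Complex.Gamma_ofReal]
    push_cast
    rw [Complex.ofReal_cpow ht.le]
    push_cast
    ring
  have := hL.trans (hC.trans hR.symm)
  exact_mod_cast this

lemma aux_beta_integrable {u v t : ℝ} (hu : 0 < u) (hv : 0 < v) (ht : 0 < t) :
    IntegrableOn (fun s => s ^ (u - 1) * (t - s) ^ (v - 1)) (Ioc (0:ℝ) t) := by
  have h1 : IntervalIntegrable (fun x => (x:ℂ) ^ ((u:ℂ) - 1) * ((1:ℂ) - x) ^ ((v:ℂ) - 1))
      volume 0 1 := Complex.betaIntegral_convergent (by simpa using hu) (by simpa using hv)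
  have h2 : IntervalIntegrable (fun s => ((s/t:ℝ):ℂ) ^ ((u:ℂ) - 1) * ((1:ℂ) - (s/t:ℝ)) ^ ((v:ℂ) - 1))
      volume 0 t := by
    have := h1.comp_mul_right (c := t⁻¹)
    simpa [div_eq_mul_inv, ht.ne'] using this
  have h3 : IntegrableOn (fun s => ((s/t:ℝ):ℂ) ^ ((u:ℂ) - 1) * ((1:ℂ) - (s/t:ℝ)) ^ ((v:ℂ) - 1))
      (Ioc (0:ℝ) t) := (intervalIntegrable_iff_integrableOn_Ioc_of_le ht.le).mp h2
  have h4 := h3.norm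
  apply Integrable.mono' (h4.const_mul (t ^ (u-1) * t ^ (v-1)))
  · exact ((measurable_id'.pow_const _).mul
      ((measurable_const.sub measurable_id').pow_const _)).aestronglyMeasurable
  · filter_upwards [ae_restrict_mem measurableSet_Ioc] with s hs
    have hs0 : 0 < s := hs.1
    have hst : s ≤ t := hs.2
    have hd1 : (0:ℝ) ≤ s / t := by positivity
    have hd2 : (0:ℝ) ≤ 1 - s / t := by
      rw [sub_nonneg]; exact (div_le_one ht).mpr hst
    rw [Real.norm_eq_abs, abs_of_nonneg (mul_nonneg (Real.rpow_nonneg hs0.le _)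
      (Real.rpow_nonneg (by linarith) _))]
    have e1 : ‖((s/t:ℝ):ℂ) ^ ((u:ℂ) - 1)‖ = (s/t) ^ (u - 1) := by
      rw [show ((u:ℂ) - 1) = ((u-1:ℝ):ℂ) by push_cast; ring,
        ← Complex.ofReal_cpow hd1 (u-1), Complex.norm_real,
        Real.norm_eq_abs, abs_of_nonneg (Real.rpow_nonneg hd1 _)]
    have e2 : ‖((1:ℂ) - ((s/t:ℝ):ℂ)) ^ ((v:ℂ) - 1)‖ = (1 - s/t) ^ (v - 1) := by
      rw [show ((1:ℂ) - ((s/t:ℝ):ℂ)) = (((1 - s/t : ℝ)):ℂ) by push_cast; ring,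
        show ((v:ℂ) - 1) = ((v-1:ℝ):ℂ) by push_cast; ring,
        ← Complex.ofReal_cpow hd2 (v-1), Complex.norm_real, Real.norm_eq_abs,
        abs_of_nonneg (Real.rpow_nonneg hd2 _)]
    rw [norm_mul, e1, e2]
    apply le_of_eq
    rw [Real.div_rpow hs0.le ht.le, show (1 - s/t) = (t - s)/t by field_simp,
      Real.div_rpow (by linarith : (0:ℝ) ≤ t - s) ht.le]
    have hp1 := Real.rpow_pos_of_pos ht (u-1)
    have hp2 := Real.rpow_pos_of_pos ht (v-1)
    field_simp

/-- Mittag-Leffler function `E_{α,α}(x) = Σ_{n=0}^∞ xⁿ / Γ(α(n+1))`. -/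
noncomputable def mlf (α x : ℝ) : ℝ := ∑' n : ℕ, x ^ n / Real.Gamma (α * (n + 1))

/-- Derivative of the scale function: `W'(x) = c⁻¹ x^{α-1} E_{α,α}(-(b/c) x^α)`. -/
noncomputable def Wd (α c b : ℝ) (x : ℝ) : ℝ := c⁻¹ * x ^ (α - 1) * mlf α (-(b / c) * x ^ α)

/-- Scale function: `W(x) = ∫_0^x W'(s) ds` for `x ≥ 0`, and `W(x) = 0` for `x < 0`. -/
noncomputable def Wsc (α c b : ℝ) (x : ℝ) : ℝ :=
  if x ≤ 0 then 0 else ∫ s in (0:ℝ)..x, Wd α c b s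

lemma Wd_tsum {α c b : ℝ} (hα : 0 < α) {s : ℝ} (hs : 0 < s) :
    Wd α c b s = ∑' n : ℕ, (c⁻¹ * ((-(b / c)) ^ n / Real.Gamma (α * (n + 1))))
      * s ^ (α * (n + 1) - 1) := by
  rw [Wd, mlf, ← tsum_mul_left]
  apply tsum_congr
  intro n
  rw [mul_pow, ← Real.rpow_natCast (s ^ α) n, ← Real.rpow_mul hs.le,
    show α * ((n:ℝ) + 1) - 1 = (α - 1) + α * n by ring, Real.rpow_add hs]
  ring

theorem K_conv_Wd (α c b : ℝ) (hα : 0 < α) (hα1 : α < 1) (hc : 0 < c) (hb : 0 ≤ b) :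
    ∀ t > (0:ℝ),
      (∫ s in (0:ℝ)..t, (c * (t - s) ^ (-α) / Real.Gamma (1 - α)) * Wd α c b s)
        = 1 - b * Wsc α c b t := by
  intro t ht
  have h1α : (0:ℝ) < 1 - α := by linarith
  have hΓα : 0 < Real.Gamma (1 - α) := Real.Gamma_pos_of_pos h1α
  set q : ℝ := -(b / c) with hqdef
  set y : ℝ := q * t ^ α with hydef
  have htα : (0:ℝ) < t ^ α := Real.rpow_pos_of_pos ht α
  have hGpos : ∀ n : ℕ, (0:ℝ) < Real.Gamma (α * (n + 1)) := fun n =>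
    Real.Gamma_pos_of_pos (by positivity)
  have habsq : |q| = b / c := by rw [hqdef, abs_neg, abs_of_nonneg (by positivity)]
  have htpow : ∀ n : ℕ, t ^ (α * (n:ℝ)) = (t ^ α) ^ n := by
    intro n
    rw [← Real.rpow_natCast (t ^ α) n, ← Real.rpow_mul ht.le, mul_comm]
  have hΓ1 : ∀ n : ℕ, (0:ℝ) < Real.Gamma (α * n + 1) := fun n =>
    Real.Gamma_pos_of_pos (by positivity)
  have hu : ∀ n : ℕ, (0:ℝ) < α * ((n:ℝ) + 1) := fun n => by positivity
  -- coefficients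
  set C : ℕ → ℝ := fun n => c / Real.Gamma (1 - α) * c⁻¹ * (q ^ n / Real.Gamma (α * (n + 1)))
    with hCdef
  set g : ℕ → ℝ → ℝ := fun n s => C n * (s ^ (α * (n + 1) - 1) * (t - s) ^ ((1 - α) - 1))
    with hgdef
  -- value of each beta integral
  have hval : ∀ n : ℕ, (∫ s in Ioc (0:ℝ) t, s ^ (α * ((n:ℝ) + 1) - 1) * (t - s) ^ ((1 - α) - 1))
      = t ^ (α * (n:ℝ)) * (Real.Gamma (α * (n + 1)) * Real.Gamma (1 - α)
          / Real.Gamma (α * n + 1)) := by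
    intro n
    rw [← intervalIntegral.integral_of_le ht.le, aux_beta (hu n) h1α ht,
      show α * ((n:ℝ) + 1) + (1 - α) - 1 = α * n by ring,
      show α * ((n:ℝ) + 1) + (1 - α) = α * n + 1 by ring]
  have hint : ∀ n : ℕ, IntegrableOn
      (fun s => s ^ (α * ((n:ℝ) + 1) - 1) * (t - s) ^ ((1 - α) - 1)) (Ioc (0:ℝ) t) :=
    fun n => aux_beta_integrable (hu n) h1α ht
  have hgint : ∀ n : ℕ, IntegrableOn (g n) (Ioc (0:ℝ) t) := fun n => (hint n).const_mul _
  have hmeas : ∀ n : ℕ, AEStronglyMeasurable (g n) (volume.restrict (Ioc (0:ℝ) t)) :=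
    fun n => (hgint n).aestronglyMeasurable
  -- norm integrals
  have hnorm : ∀ n : ℕ, (∫ s in Ioc (0:ℝ) t, ‖g n s‖)
      = |C n| * (t ^ (α * (n:ℝ)) * (Real.Gamma (α * (n + 1)) * Real.Gamma (1 - α)
          / Real.Gamma (α * n + 1))) := by
    intro n
    rw [← hval n, ← integral_const_mul]
    apply setIntegral_congr_fun measurableSet_Ioc
    intro s hs
    rw [hgdef]
    simp only [norm_mul, Real.norm_eq_abs, abs_mul]
    rw [abs_of_nonneg (Real.rpow_nonneg hs.1.le _),
      abs_of_nonneg (Real.rpow_nonneg (by linarith [hs.2] : (0:ℝ) ≤ t - s) _)]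
  have hE : ∀ n : ℕ, |C n| * (t ^ (α * (n:ℝ)) * (Real.Gamma (α * (n + 1)) * Real.Gamma (1 - α)
      / Real.Gamma (α * n + 1))) = (b / c * t ^ α) ^ n / Real.Gamma (α * n + 1) := by
    intro n
    rw [hCdef]
    simp only [abs_mul, abs_div, abs_pow, habsq]
    rw [abs_of_pos hc, abs_of_pos hΓα, abs_of_pos (hGpos n),
      abs_of_pos (by positivity : (0:ℝ) < c⁻¹), htpow n, mul_pow]
    field_simp
  have hEsum : Summable fun n : ℕ => (b / c * t ^ α) ^ n / Real.Gamma (α * n + 1) :=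
    aux_summable hα hα1 one_pos _
  -- interchange for LHS
  have hswap : (∫ s in Ioc (0:ℝ) t, ∑' n : ℕ, g n s) = ∑' n : ℕ, ∫ s in Ioc (0:ℝ) t, g n s := by
    apply integral_tsum hmeas
    have key : ∀ n : ℕ, (∫⁻ s in Ioc (0:ℝ) t, ‖g n s‖ₑ)
        = ENNReal.ofReal ((b / c * t ^ α) ^ n / Real.Gamma (α * n + 1)) := by
      intro n
      rw [← ofReal_integral_norm_eq_lintegral_enorm (hgint n), hnorm n, hE n]
    rw [tsum_congr key, ← ENNReal.ofReal_tsum_of_nonneg (fun n => by positivity) hEsum]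
    exact ENNReal.ofReal_ne_top
  -- LHS equals the series
  have hcong : (∫ s in Ioc (0:ℝ) t, (c * (t - s) ^ (-α) / Real.Gamma (1 - α)) * Wd α c b s)
      = ∫ s in Ioc (0:ℝ) t, ∑' n : ℕ, g n s := by
    apply setIntegral_congr_fun measurableSet_Ioc
    intro s hs
    show (c * (t - s) ^ (-α) / Real.Gamma (1 - α)) * Wd α c b s = ∑' n : ℕ, g n s
    rw [Wd_tsum hα hs.1, ← tsum_mul_left]
    apply tsum_congr
    intro n
    rw [hgdef, show (1 - α) - 1 = -α by ring]
    ring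
  have hLHS : (∫ s in (0:ℝ)..t, (c * (t - s) ^ (-α) / Real.Gamma (1 - α)) * Wd α c b s)
      = ∑' n : ℕ, y ^ n / Real.Gamma (α * n + 1) := by
    rw [intervalIntegral.integral_of_le ht.le, hcong, hswap]
    apply tsum_congr
    intro n
    rw [show (∫ s in Ioc (0:ℝ) t, g n s) = C n * ∫ s in Ioc (0:ℝ) t,
        s ^ (α * ((n:ℝ) + 1) - 1) * (t - s) ^ ((1 - α) - 1) from integral_const_mul _ _, hval n,
      hydef, mul_pow, ← htpow n, hCdef]
    field_simp
  -- the scale function as a series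
  set D : ℕ → ℝ := fun n => c⁻¹ * (q ^ n / Real.Gamma (α * (n + 1))) with hDdef
  set h : ℕ → ℝ → ℝ := fun n s => D n * s ^ (α * (n + 1) - 1) with hhdef
  have hrint : ∀ n : ℕ, IntegrableOn (fun s : ℝ => s ^ (α * ((n:ℝ) + 1) - 1)) (Ioc (0:ℝ) t) := by
    intro n
    rw [← intervalIntegrable_iff_integrableOn_Ioc_of_le ht.le]
    apply intervalIntegral.intervalIntegrable_rpow'
    linarith [hu n]
  have hhint : ∀ n : ℕ, IntegrableOn (h n) (Ioc (0:ℝ) t) := fun n => (hrint n).const_mul _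
  have hrval : ∀ n : ℕ, (∫ s in Ioc (0:ℝ) t, s ^ (α * ((n:ℝ) + 1) - 1))
      = t ^ (α * ((n:ℝ) + 1)) / (α * ((n:ℝ) + 1)) := by
    intro n
    rw [← intervalIntegral.integral_of_le ht.le,
      integral_rpow (Or.inl (by linarith [hu n]))]
    rw [Real.zero_rpow (by linarith [hu n] : α * ((n:ℝ) + 1) - 1 + 1 ≠ 0), sub_add_cancel]
    ring_nf
  have hΓs : ∀ n : ℕ, (0:ℝ) < Real.Gamma (α * n + (α + 1)) := fun n =>
    Real.Gamma_pos_of_pos (by positivity)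
  have hGam : ∀ n : ℕ, Real.Gamma (α * (n:ℝ) + (α + 1))
      = α * ((n:ℝ) + 1) * Real.Gamma (α * ((n:ℝ) + 1)) := by
    intro n
    rw [show α * (n:ℝ) + (α + 1) = (α * ((n:ℝ) + 1)) + 1 by ring,
      Real.Gamma_add_one (hu n).ne']
  have htsplit : ∀ n : ℕ, t ^ (α * ((n:ℝ) + 1)) = (t ^ α) ^ n * t ^ α := by
    intro n
    rw [show α * ((n:ℝ) + 1) = α * (n:ℝ) + α by ring, Real.rpow_add ht, htpow n]
  have hhval : ∀ n : ℕ, (∫ s in Ioc (0:ℝ) t, h n s)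
      = (c⁻¹ * t ^ α) * (y ^ n / Real.Gamma (α * n + (α + 1))) := by
    intro n
    rw [show (∫ s in Ioc (0:ℝ) t, h n s) = D n * ∫ s in Ioc (0:ℝ) t,
        s ^ (α * ((n:ℝ) + 1) - 1) from integral_const_mul _ _, hrval n, hGam n, htsplit n,
      hDdef, hydef, mul_pow, ← htpow n, htpow n]
    have := (hGpos n); have := (hu n)
    field_simp
  have hhnorm : ∀ n : ℕ, (∫ s in Ioc (0:ℝ) t, ‖h n s‖)
      = (c⁻¹ * t ^ α) * ((b / c * t ^ α) ^ n / Real.Gamma (α * n + (α + 1))) := by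
    intro n
    have e1 : (∫ s in Ioc (0:ℝ) t, ‖h n s‖) = |D n| * ∫ s in Ioc (0:ℝ) t,
        s ^ (α * ((n:ℝ) + 1) - 1) := by
      rw [← integral_const_mul]
      apply setIntegral_congr_fun measurableSet_Ioc
      intro s hs
      rw [hhdef]
      simp only [norm_mul, Real.norm_eq_abs, abs_mul]
      rw [abs_of_nonneg (Real.rpow_nonneg hs.1.le _)]
    rw [e1, hrval n, hGam n, htsplit n, hDdef]
    simp only [abs_mul, abs_div, abs_pow, habsq]
    rw [abs_of_pos (by positivity : (0:ℝ) < c⁻¹), abs_of_pos (hGpos n), mul_pow]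
    have := (hGpos n); have := (hu n)
    field_simp
  have hEsum' : Summable fun n : ℕ => (b / c * t ^ α) ^ n / Real.Gamma (α * n + (α + 1)) :=
    aux_summable hα hα1 (by positivity) _
  have hswap' : (∫ s in Ioc (0:ℝ) t, ∑' n : ℕ, h n s) = ∑' n : ℕ, ∫ s in Ioc (0:ℝ) t, h n s := by
    apply integral_tsum (fun n => (hhint n).aestronglyMeasurable)
    have key : ∀ n : ℕ, (∫⁻ s in Ioc (0:ℝ) t, ‖h n s‖ₑ)
        = ENNReal.ofReal ((c⁻¹ * t ^ α) * ((b / c * t ^ α) ^ n / Real.Gamma (α * n + (α + 1)))) := by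
      intro n
      rw [← ofReal_integral_norm_eq_lintegral_enorm (hhint n), hhnorm n]
    rw [tsum_congr key, ← ENNReal.ofReal_tsum_of_nonneg (fun n => by positivity)
      (hEsum'.mul_left _)]
    exact ENNReal.ofReal_ne_top
  have hW : Wsc α c b t = (c⁻¹ * t ^ α) * ∑' n : ℕ, y ^ n / Real.Gamma (α * n + (α + 1)) := by
    rw [Wsc, if_neg (not_le.mpr ht), intervalIntegral.integral_of_le ht.le]
    have hcong' : (∫ s in Ioc (0:ℝ) t, Wd α c b s) = ∫ s in Ioc (0:ℝ) t, ∑' n : ℕ, h n s := by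
      apply setIntegral_congr_fun measurableSet_Ioc
      intro s hs
      exact Wd_tsum hα hs.1
    rw [hcong', hswap', tsum_congr hhval, tsum_mul_left]
  -- conclusion
  rw [hLHS, hW]
  rw [Summable.tsum_eq_zero_add (aux_summable hα hα1 one_pos y)]
  have h0 : y ^ 0 / Real.Gamma (α * (0:ℕ) + 1) = 1 := by
    norm_num [Real.Gamma_one]
  rw [h0]
  have hshift : ∀ n : ℕ, y ^ (n + 1) / Real.Gamma (α * (n + 1 : ℕ) + 1)
      = y * (y ^ n / Real.Gamma (α * n + (α + 1))) := by
    intro n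
    rw [show (α * ((n + 1 : ℕ):ℝ) + 1) = α * n + (α + 1) by push_cast; ring, pow_succ]
    ring
  rw [tsum_congr hshift, tsum_mul_left]
  rw [hydef, hqdef]
  field_simp
  ring
end

section
/- For α ∈ (0,1), lim_{t→0+} t^{-α} ∫_0^∞ (1 - e^{-t x}) · α (1+x)^{-1-α} dx = Γ(1-α); that is, 1 minus the Laplace transform of the probability density x ↦ α(1+x)^{-1-α} is asymptotically equivalent to Γ(1-α) t^{α} as t → 0+. -/
open MeasureTheory

open Set Real Filter in
/-- The dominating function is integrable. -/
lemma pareto_bound_integrable (α : ℝ) (hα : 0 < α) (hα1 : α < 1) :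
    IntegrableOn (fun y : ℝ => (1 - Real.exp (-y)) * (α * y ^ (-1 - α))) (Ioi 0) := by
  have hmeas : ∀ s : Set ℝ, s ⊆ Ioi 0 → MeasurableSet s →
      AEStronglyMeasurable (fun y : ℝ => (1 - Real.exp (-y)) * (α * y ^ (-1 - α)))
        (volume.restrict s) := by
    intro s hs hsm
    refine (ContinuousOn.aestronglyMeasurable ?_ hsm)
    refine ContinuousOn.mul ?_ (continuousOn_const.mul ?_)
    · exact (continuous_const.sub (Real.continuous_exp.comp continuous_neg)).continuousOn
    · intro y hy
      exact (Real.continuousAt_rpow_const y _ (Or.inl (ne_of_gt (hs hy)))).continuousWithinAt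
  rw [← Ioc_union_Ioi_eq_Ioi (zero_le_one (α := ℝ)), integrableOn_union]
  constructor
  · -- on (0,1] : bound by α * y ^ (-α)
    have hint : IntegrableOn (fun y : ℝ => α * y ^ (-α)) (Ioc (0:ℝ) 1) := by
      refine Integrable.const_mul ?_ α
      have := intervalIntegral.intervalIntegrable_rpow' (a := 0) (b := 1)
        (r := -α) (by linarith)
      rwa [intervalIntegrable_iff_integrableOn_Ioc_of_le zero_le_one] at this
    refine Integrable.mono' hint (hmeas _ (Ioc_subset_Ioi_self) measurableSet_Ioc) ?_
    rw [ae_restrict_iff' measurableSet_Ioc]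
    filter_upwards with y hy
    have hy0 : 0 < y := hy.1
    have h1 : 1 - Real.exp (-y) ≤ y := by
      nlinarith [Real.add_one_le_exp (-y), Real.exp_pos (-y)]
    have h0 : 0 ≤ 1 - Real.exp (-y) := by
      have : Real.exp (-y) ≤ 1 := Real.exp_le_one_iff.mpr (by linarith)
      linarith
    have hrpos : (0:ℝ) ≤ y ^ (-1 - α) := Real.rpow_nonneg hy0.le _
    rw [Real.norm_eq_abs, abs_of_nonneg (by positivity)]
    have : y ^ (-α) = y * y ^ (-1 - α) := by
      rw [← Real.rpow_one_add' hy0.le (by intro h; nlinarith)]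
      ring_nf
    rw [this]
    calc (1 - Real.exp (-y)) * (α * y ^ (-1 - α))
        ≤ y * (α * y ^ (-1 - α)) := by
          apply mul_le_mul_of_nonneg_right h1 (by positivity)
      _ = α * (y * y ^ (-1 - α)) := by ring
  · -- on (1,∞) : bound by α * y ^ (-1-α)
    have hint : IntegrableOn (fun y : ℝ => α * y ^ (-1 - α)) (Ioi (1:ℝ)) :=
      (integrableOn_Ioi_rpow_of_lt (by linarith) one_pos).const_mul α
    refine Integrable.mono' hint (hmeas _ (Ioi_subset_Ioi zero_le_one) measurableSet_Ioi) ?_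
    rw [ae_restrict_iff' measurableSet_Ioi]
    filter_upwards with y hy
    have hy0 : (0:ℝ) < y := lt_trans one_pos hy
    have h0 : 0 ≤ 1 - Real.exp (-y) := by
      have : Real.exp (-y) ≤ 1 := Real.exp_le_one_iff.mpr (by linarith)
      linarith
    have h1 : 1 - Real.exp (-y) ≤ 1 := by
      have := Real.exp_pos (-y); linarith
    have hrpos : (0:ℝ) ≤ α * y ^ (-1 - α) := by positivity
    rw [Real.norm_eq_abs, abs_of_nonneg (by positivity)]
    calc (1 - Real.exp (-y)) * (α * y ^ (-1 - α))
        ≤ 1 * (α * y ^ (-1 - α)) := mul_le_mul_of_nonneg_right h1 hrpos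
      _ = α * y ^ (-1 - α) := one_mul _

open Set Real Filter in
/-- The value of the limit integral. -/
lemma pareto_bound_integral (α : ℝ) (hα : 0 < α) (hα1 : α < 1) :
    ∫ y in Ioi (0:ℝ), (1 - Real.exp (-y)) * (α * y ^ (-1 - α)) = Real.Gamma (1 - α) := by
  set G : ℝ → ℝ := fun y => -((1 - Real.exp (-y)) * y ^ (-α)) with hG
  set G' : ℝ → ℝ := fun y =>
    (1 - Real.exp (-y)) * (α * y ^ (-1 - α)) - Real.exp (-y) * y ^ (-α) with hG'
  have hderiv : ∀ y ∈ Ioi (0:ℝ), HasDerivAt G (G' y) y := by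
    intro y hy
    have hy0 : (0:ℝ) < y := hy
    have h1 : HasDerivAt (fun x : ℝ => 1 - Real.exp (-x)) (Real.exp (-y)) y := by
      have := ((Real.hasDerivAt_exp (-y)).comp y ((hasDerivAt_id y).neg))
      exact ((hasDerivAt_const y (1:ℝ)).sub this).congr_deriv (by simp)
    have h2 : HasDerivAt (fun x : ℝ => x ^ (-α)) (-α * y ^ (-α - 1)) y :=
      Real.hasDerivAt_rpow_const (Or.inl hy0.ne')
    have h3 := (h1.mul h2).neg
    refine HasDerivAt.congr_deriv h3 ?_
    have : y ^ (-α - 1) = y ^ (-1 - α) := by ring_nf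
    rw [hG']
    simp only [this]
    ring
  have hcont : ContinuousWithinAt G (Ici (0:ℝ)) 0 := by
    have hG0 : G 0 = 0 := by simp [hG]
    rw [ContinuousWithinAt, hG0]
    have key : Tendsto (fun y : ℝ => (1 - Real.exp (-y)) * y ^ (-α))
        (nhdsWithin 0 (Ici 0)) (nhds 0) := by
      apply squeeze_zero' (g := fun y : ℝ => y ^ (1 - α))
      · filter_upwards [self_mem_nhdsWithin] with y hy
        have hy0 : (0:ℝ) ≤ y := hy
        have : Real.exp (-y) ≤ 1 := Real.exp_le_one_iff.mpr (by linarith)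
        have := Real.rpow_nonneg hy0 (-α)
        nlinarith
      · filter_upwards [self_mem_nhdsWithin] with y hy
        have hy0 : (0:ℝ) ≤ y := hy
        rcases eq_or_lt_of_le hy0 with h | h
        · rw [← h]
          simp [Real.zero_rpow (by linarith : (1:ℝ) - α ≠ 0)]
        · have h1 : 1 - Real.exp (-y) ≤ y := by
            nlinarith [Real.add_one_le_exp (-y), Real.exp_pos (-y)]
          have hr : (0:ℝ) ≤ y ^ (-α) := Real.rpow_nonneg hy0 _
          calc (1 - Real.exp (-y)) * y ^ (-α) ≤ y * y ^ (-α) :=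
                mul_le_mul_of_nonneg_right h1 hr
            _ = y ^ (1 - α) := by
                rw [← Real.rpow_one_add' h.le (by intro h'; nlinarith)]
                ring_nf
      · have : Tendsto (fun y : ℝ => y ^ (1 - α)) (nhds 0) (nhds ((0:ℝ) ^ (1 - α))) :=
          (Real.continuousAt_rpow_const 0 (1 - α) (Or.inr (by linarith))).tendsto
        rw [Real.zero_rpow (by linarith : (1:ℝ) - α ≠ 0)] at this
        exact this.mono_left nhdsWithin_le_nhds
    simpa [hG] using key.neg
  have htop : Tendsto G atTop (nhds 0) := by
    have h1 : Tendsto (fun y : ℝ => 1 - Real.exp (-y)) atTop (nhds 1) := by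
      have := Real.tendsto_exp_neg_atTop_nhds_zero
      have := (tendsto_const_nhds (x := (1:ℝ)) (f := atTop)).sub this
      simpa using this
    have h2 : Tendsto (fun y : ℝ => y ^ (-α)) atTop (nhds 0) := tendsto_rpow_neg_atTop hα
    have := (h1.mul h2).neg
    simpa using this
  have hGamma_int : IntegrableOn (fun y : ℝ => Real.exp (-y) * y ^ (-α)) (Ioi 0) := by
    have := Real.GammaIntegral_convergent (s := 1 - α) (by linarith)
    simpa using this
  have hbint := pareto_bound_integrable α hα hα1
  have hG'int : IntegrableOn G' (Ioi 0) := hbint.sub hGamma_int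
  have hFTC := integral_Ioi_of_hasDerivAt_of_tendsto hcont hderiv hG'int htop
  have hG0 : G 0 = 0 := by simp [hG]
  rw [hG0, sub_zero] at hFTC
  have hsplit : ∫ y in Ioi (0:ℝ), G' y =
      (∫ y in Ioi (0:ℝ), (1 - Real.exp (-y)) * (α * y ^ (-1 - α))) -
        ∫ y in Ioi (0:ℝ), Real.exp (-y) * y ^ (-α) :=
    integral_sub hbint hGamma_int
  have hGval : ∫ y in Ioi (0:ℝ), Real.exp (-y) * y ^ (-α) = Real.Gamma (1 - α) := by
    rw [Real.Gamma_eq_integral (by linarith : (0:ℝ) < 1 - α)]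
    congr 1
    ext y
    norm_num
  rw [hsplit, hGval] at hFTC
  linarith

open Set Real Filter in
/-- Change of variables `x = y / t`. -/
lemma pareto_subst (α : ℝ) (hα : 0 < α) (hα1 : α < 1) (t : ℝ) (ht : 0 < t) :
    t ^ (-α) * ∫ x in Ioi (0:ℝ), (1 - Real.exp (-t * x)) * (α * (1 + x) ^ (-1 - α)) =
      ∫ y in Ioi (0:ℝ), (1 - Real.exp (-y)) * (α * (t + y) ^ (-1 - α)) := by
  have hsub := integral_comp_mul_left_Ioi
    (fun y : ℝ => (1 - Real.exp (-y)) * (α * ((t + y) / t) ^ (-1 - α))) 0 ht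
  rw [mul_zero] at hsub
  have heq1 : ∀ x ∈ Ioi (0:ℝ),
      (1 - Real.exp (-t * x)) * (α * (1 + x) ^ (-1 - α)) =
      (fun y : ℝ => (1 - Real.exp (-y)) * (α * ((t + y) / t) ^ (-1 - α))) (t * x) := by
    intro x hx
    simp only
    rw [neg_mul]
    congr 3
    field_simp
  rw [setIntegral_congr_fun measurableSet_Ioi heq1, hsub]
  have heq2 : ∀ y ∈ Ioi (0:ℝ),
      (1 - Real.exp (-y)) * (α * ((t + y) / t) ^ (-1 - α)) =
      t ^ (-(-1 - α)) * ((1 - Real.exp (-y)) * (α * (t + y) ^ (-1 - α))) := by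
    intro y hy
    have hy0 : (0:ℝ) < y := hy
    rw [Real.div_rpow (by linarith) ht.le, div_eq_mul_inv, ← Real.rpow_neg ht.le]
    ring
  rw [setIntegral_congr_fun measurableSet_Ioi heq2, integral_const_mul, smul_eq_mul]
  rw [← mul_assoc, ← mul_assoc]
  have : t ^ (-α) * t⁻¹ * t ^ (-(-1 - α)) = 1 := by
    rw [← Real.rpow_neg_one t, ← Real.rpow_add ht, ← Real.rpow_add ht]
    rw [show -α + -1 + -(-1 - α) = 0 by ring, Real.rpow_zero]
  rw [this, one_mul]

theorem laplace_transform_pareto_asymptotic (α : ℝ) (hα : 0 < α) (hα1 : α < 1) :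
    Filter.Tendsto
      (fun t : ℝ => t ^ (-α) *
        ∫ x in Set.Ioi (0:ℝ), (1 - Real.exp (-t * x)) * (α * (1 + x) ^ (-1 - α)))
      (nhdsWithin 0 (Set.Ioi 0)) (nhds (Real.Gamma (1 - α))) := by
  open Set Real Filter in
  have hmain : Tendsto
      (fun t : ℝ => ∫ y in Ioi (0:ℝ), (1 - Real.exp (-y)) * (α * (t + y) ^ (-1 - α)))
      (nhdsWithin 0 (Ioi 0)) (nhds (Real.Gamma (1 - α))) := by
    rw [← pareto_bound_integral α hα hα1]
    apply tendsto_integral_filter_of_dominated_convergence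
      (fun y : ℝ => (1 - Real.exp (-y)) * (α * y ^ (-1 - α)))
    · filter_upwards [self_mem_nhdsWithin] with t ht
      refine ContinuousOn.aestronglyMeasurable ?_ measurableSet_Ioi
      refine ContinuousOn.mul ?_ (continuousOn_const.mul ?_)
      · exact (continuous_const.sub (Real.continuous_exp.comp continuous_neg)).continuousOn
      · intro y hy
        have : (0:ℝ) < t + y := by
          have : (0:ℝ) < y := hy
          have ht0 : (0:ℝ) < t := ht
          linarith
        exact (ContinuousWithinAt.rpow_const
          ((continuous_const.add continuous_id).continuousWithinAt)
          (Or.inl this.ne'))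
    · filter_upwards [self_mem_nhdsWithin] with t ht
      rw [ae_restrict_iff' measurableSet_Ioi]
      filter_upwards with y hy
      have hy0 : (0:ℝ) < y := hy
      have ht0 : (0:ℝ) < t := ht
      have h0 : 0 ≤ 1 - Real.exp (-y) := by
        have : Real.exp (-y) ≤ 1 := Real.exp_le_one_iff.mpr (by linarith)
        linarith
      have hle : (t + y) ^ (-1 - α) ≤ y ^ (-1 - α) :=
        Real.rpow_le_rpow_of_nonpos hy0 (by linarith) (by linarith)
      rw [Real.norm_eq_abs, abs_of_nonneg]
      · apply mul_le_mul_of_nonneg_left _ h0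
        exact mul_le_mul_of_nonneg_left hle hα.le
      · have : (0:ℝ) ≤ (t + y) ^ (-1 - α) := Real.rpow_nonneg (by linarith) _
        positivity
    · exact pareto_bound_integrable α hα hα1
    · rw [ae_restrict_iff' measurableSet_Ioi]
      filter_upwards with y hy
      have hy0 : (0:ℝ) < y := hy
      have : ContinuousAt (fun t : ℝ => (1 - Real.exp (-y)) * (α * (t + y) ^ (-1 - α))) 0 := by
        apply ContinuousAt.mul continuousAt_const
        apply ContinuousAt.mul continuousAt_const
        exact ContinuousAt.rpow_const (continuous_id.add continuous_const).continuousAt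
          (Or.inl (by simpa using hy0.ne'))
      have := this.tendsto
      rw [show (0:ℝ) + y = y by ring] at this
      exact this.mono_left nhdsWithin_le_nhds
  refine hmain.congr' ?_
  filter_upwards [self_mem_nhdsWithin] with t ht
  exact (pareto_subst α hα hα1 t ht).symm
end

section
/- Let α ∈ (0,1), C₀ > 0, and let W₀ : ℝ → ℝ satisfy W₀(x) = 0 for x ≤ 0 and be differentiable on (0,∞) with 0 ≤ W₀'(t) ≤ C₀ t^{α-1} for all t > 0. Then for every p > 1+α there exists a constant C > 0 such that for all h ∈ (0,1], ∫_0^1 |W₀(s+h) - W₀(s)|^p (s+h)^{-α-1} ds + ∫_0^h ∫_0^s |W₀(s) - W₀(s-y)|^p y^{-α-2} dy ds ≤ C h^{(p-1)α}. -/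
open MeasureTheory

namespace SFIIB
open MeasureTheory Set


lemma meas_rpow_const (c : ℝ) : Measurable fun x : ℝ => x ^ c := by
  apply measurable_of_measurable_union_cover ({0} : Set ℝ) ({0}ᶜ)
    (measurableSet_singleton 0) (measurableSet_singleton 0).compl (by simp)
  · exact Subsingleton.measurable
  · have hc : ContinuousOn (fun x : ℝ => x ^ c) ({0}ᶜ : Set ℝ) := fun x hx =>
      (Real.continuousAt_rpow_const x c (Or.inl hx)).continuousWithinAt
    exact hc.restrict.measurable

lemma rpow_subadd {x y α : ℝ} (hx : 0 ≤ x) (hy : 0 ≤ y) (hα : 0 ≤ α) (hα1 : α ≤ 1) :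
    (x + y) ^ α ≤ x ^ α + y ^ α := by
  have h := NNReal.rpow_add_le_add_rpow x.toNNReal y.toNNReal hα hα1
  have := NNReal.coe_le_coe.2 h
  push_cast [NNReal.coe_rpow] at this
  rwa [Real.coe_toNNReal x hx, Real.coe_toNNReal y hy] at this

lemma mono_aux (f f' : ℝ → ℝ) (hf : ∀ t > (0:ℝ), HasDerivAt f (f' t) t)
    (h0 : ∀ t > (0:ℝ), 0 ≤ f' t) {a b : ℝ} (ha : 0 < a) (hab : a ≤ b) : f a ≤ f b := by
  have hm : MonotoneOn f (Set.Icc a b) := by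
    apply monotoneOn_of_deriv_nonneg (convex_Icc a b)
    · intro x hx
      exact ((hf x (lt_of_lt_of_le ha hx.1)).continuousAt).continuousWithinAt
    · rw [interior_Icc]
      intro x hx
      exact ((hf x (lt_trans ha hx.1)).differentiableAt).differentiableWithinAt
    · rw [interior_Icc]
      intro x hx
      rw [(hf x (lt_trans ha hx.1)).deriv]
      exact h0 x (lt_trans ha hx.1)
  exact hm (Set.left_mem_Icc.2 hab) (Set.right_mem_Icc.2 hab) hab

section
variable (α C₀ : ℝ) (hα : 0 < α) (hα1 : α < 1) (hC₀ : 0 < C₀)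
  (W₀ W₀' : ℝ → ℝ) (hzero : ∀ x ≤ (0:ℝ), W₀ x = 0)
  (hderiv : ∀ t > (0:ℝ), HasDerivAt W₀ (W₀' t) t)
  (hnn : ∀ t > (0:ℝ), 0 ≤ W₀' t)
  (hbd : ∀ t > (0:ℝ), W₀' t ≤ C₀ * t ^ (α - 1))

include hderiv hnn in
lemma W_mono {a b : ℝ} (ha : 0 < a) (hab : a ≤ b) : W₀ a ≤ W₀ b :=
  mono_aux W₀ W₀' hderiv hnn ha hab

include hα hderiv hbd in
lemma W_incr_rpow {a b : ℝ} (ha : 0 < a) (hab : a ≤ b) :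
    W₀ b - W₀ a ≤ C₀ / α * (b ^ α - a ^ α) := by
  have key : ∀ t > (0:ℝ), HasDerivAt (fun t => C₀ / α * t ^ α - W₀ t)
      (C₀ * t ^ (α - 1) - W₀' t) t := by
    intro t ht
    have h1 : HasDerivAt (fun t : ℝ => C₀ / α * t ^ α) (C₀ / α * (α * t ^ (α - 1))) t :=
      (Real.hasDerivAt_rpow_const (Or.inl ht.ne')).const_mul _
    have h2 := h1.sub (hderiv t ht)
    refine h2.congr_deriv ?_
    rw [← mul_assoc, div_mul_cancel₀ _ hα.ne']
  have h0 : ∀ t > (0:ℝ), 0 ≤ C₀ * t ^ (α - 1) - W₀' t := fun t ht =>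
    sub_nonneg.2 (hbd t ht)
  have := mono_aux _ _ key h0 ha hab
  linarith

include hα1 hC₀ hderiv hbd in
lemma W_incr_lin {a b : ℝ} (ha : 0 < a) (hab : a ≤ b) :
    W₀ b - W₀ a ≤ C₀ * a ^ (α - 1) * (b - a) := by
  have key : ∀ t, t > (0:ℝ) → HasDerivAt (fun t => C₀ * a ^ (α - 1) * t - W₀ t)
      (C₀ * a ^ (α - 1) - W₀' t) t := by
    intro t ht
    refine (((hasDerivAt_id' t).const_mul (C₀ * a ^ (α - 1))).sub (hderiv t ht)).congr_deriv ?_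
    simp
  have hm : MonotoneOn (fun t => C₀ * a ^ (α - 1) * t - W₀ t) (Set.Icc a b) := by
    apply monotoneOn_of_deriv_nonneg (convex_Icc a b)
    · intro x hx
      exact ((key x (lt_of_lt_of_le ha hx.1)).continuousAt).continuousWithinAt
    · rw [interior_Icc]
      intro x hx
      exact ((key x (lt_trans ha hx.1)).differentiableAt).differentiableWithinAt
    · rw [interior_Icc]
      intro x hx
      rw [(key x (lt_trans ha hx.1)).deriv]
      have hx0 : (0:ℝ) < x := lt_trans ha hx.1
      have : W₀' x ≤ C₀ * a ^ (α - 1) := by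
        calc W₀' x ≤ C₀ * x ^ (α - 1) := hbd x hx0
        _ ≤ C₀ * a ^ (α - 1) :=
            mul_le_mul_of_nonneg_left
              (Real.rpow_le_rpow_of_nonpos ha hx.1.le (by linarith)) hC₀.le
      linarith
  have := hm (Set.left_mem_Icc.2 hab) (Set.right_mem_Icc.2 hab) hab
  simp only at this
  linarith

include hzero hderiv in
lemma W_meas : Measurable W₀ := by
  apply measurable_of_measurable_union_cover (Set.Iic (0:ℝ)) (Set.Ioi (0:ℝ))
    measurableSet_Iic measurableSet_Ioi
  · intro x _
    rcases le_or_gt x 0 with h | h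
    · exact Or.inl h
    · exact Or.inr h
  · have : (fun a : Set.Iic (0:ℝ) => W₀ a) = fun _ => 0 := by
      funext a; exact hzero a a.2
    rw [this]; exact measurable_const
  · have hc : ContinuousOn W₀ (Set.Ioi (0:ℝ)) := fun x hx =>
      ((hderiv x hx).continuousAt).continuousWithinAt
    exact hc.restrict.measurable


include hα hα1 hC₀ hzero hderiv hnn hbd in
lemma first_int {p h : ℝ} (hp : 1 + α < p) (hh : 0 < h) (hh1 : h ≤ 1) :
    (∫ s in (0:ℝ)..1, |W₀ (s + h) - W₀ s| ^ p * (s + h) ^ (-α - 1))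
      ≤ (C₀ / α) ^ p / α * h ^ ((p - 1) * α) := by
  have hp0 : (0:ℝ) < p := by linarith
  set f : ℝ → ℝ := fun s => |W₀ (s + h) - W₀ s| ^ p * (s + h) ^ (-α - 1) with hf
  set K : ℝ := (C₀ / α) ^ p * h ^ (α * p) with hKdef
  have hCα : (0:ℝ) < C₀ / α := div_pos hC₀ hα
  have hKpos : 0 < K := mul_pos (Real.rpow_pos_of_pos hCα p) (Real.rpow_pos_of_pos hh _)
  set g : ℝ → ℝ := fun s => K * (s + h) ^ (-α - 1) with hg
  have hpt : ∀ s ∈ Set.Ioc (0:ℝ) 1, f s ≤ g s := by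
    intro s hs
    have hs0 : (0:ℝ) < s := hs.1
    have hsh : (0:ℝ) < s + h := by linarith
    have hΔ0 : 0 ≤ W₀ (s + h) - W₀ s :=
      sub_nonneg.2 (W_mono W₀ W₀' hderiv hnn hs0 (by linarith))
    have hΔ : W₀ (s + h) - W₀ s ≤ C₀ / α * h ^ α := by
      have h2 := W_incr_rpow α C₀ hα W₀ W₀' hderiv hbd hs0 (by linarith : s ≤ s + h)
      have h3 : (s + h) ^ α ≤ s ^ α + h ^ α := rpow_subadd hs0.le hh.le hα.le hα1.le
      calc W₀ (s + h) - W₀ s ≤ C₀ / α * ((s + h) ^ α - s ^ α) := h2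
        _ ≤ C₀ / α * h ^ α := by
            apply mul_le_mul_of_nonneg_left _ hCα.le
            linarith
    have habs : |W₀ (s + h) - W₀ s| ^ p ≤ K := by
      rw [abs_of_nonneg hΔ0, hKdef]
      calc (W₀ (s + h) - W₀ s) ^ p ≤ (C₀ / α * h ^ α) ^ p :=
            Real.rpow_le_rpow hΔ0 hΔ hp0.le
        _ = (C₀ / α) ^ p * h ^ (α * p) := by
            rw [Real.mul_rpow hCα.le (Real.rpow_nonneg hh.le α), Real.rpow_mul hh.le]
    calc f s ≤ K * (s + h) ^ (-α - 1) :=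
          mul_le_mul_of_nonneg_right habs (Real.rpow_nonneg hsh.le _)
      _ = g s := rfl
  have hfnn : ∀ s ∈ Set.Ioc (0:ℝ) 1, 0 ≤ f s := by
    intro s hs
    exact mul_nonneg (Real.rpow_nonneg (abs_nonneg _) p)
      (Real.rpow_nonneg (by linarith [hs.1] : (0:ℝ) ≤ s + h) _)
  have hgc : ContinuousOn g (Set.Icc (0:ℝ) 1) := by
    apply continuousOn_const.mul
    apply ContinuousOn.rpow_const ((continuous_id.add continuous_const).continuousOn)
    intro s hs
    exact Or.inl (by nlinarith [hs.1] : (0:ℝ) < s + h).ne'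
  have hgint : IntegrableOn g (Set.Ioc (0:ℝ) 1) :=
    (hgc.integrableOn_Icc).mono_set Set.Ioc_subset_Icc_self
  have hWm : Measurable W₀ := W_meas W₀ W₀' hzero hderiv
  have hmeas : Measurable f := by
    apply Measurable.mul
    · exact (meas_rpow_const p).comp ((hWm.comp (measurable_id.add_const h)).sub hWm).abs
    · exact (meas_rpow_const (-α - 1)).comp (measurable_id.add_const h)
  have hfint : IntegrableOn f (Set.Ioc (0:ℝ) 1) := by
    apply Integrable.mono' hgint hmeas.aestronglyMeasurable.restrict
    filter_upwards [ae_restrict_mem measurableSet_Ioc] with s hs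
    rw [Real.norm_eq_abs, abs_of_nonneg (hfnn s hs)]
    exact hpt s hs
  -- compute ∫ g
  have hint_aux : ∫ s in (0:ℝ)..1, (s + h) ^ (-α - 1) = (h ^ (-α) - (1 + h) ^ (-α)) / α := by
    have hint : ∀ s ∈ Set.uIcc (0:ℝ) 1, HasDerivAt (fun s : ℝ => -1/α * (s + h) ^ (-α))
        ((s + h) ^ (-α - 1)) s := by
      intro s hs
      rw [Set.uIcc_of_le zero_le_one] at hs
      have hsh : (0:ℝ) < s + h := by nlinarith [hs.1]
      have h1 : HasDerivAt (fun s : ℝ => s + h) 1 s := (hasDerivAt_id s).add_const h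
      have h2 := (h1.rpow_const (p := -α) (Or.inl hsh.ne')).const_mul (-1/α)
      refine h2.congr_deriv ?_
      rw [one_mul, ← mul_assoc, div_mul_eq_mul_div, neg_one_mul, neg_neg, div_self hα.ne', one_mul]
    have hcont : ContinuousOn (fun s : ℝ => (s + h) ^ (-α - 1)) (Set.uIcc (0:ℝ) 1) := by
      apply ContinuousOn.rpow_const ((continuous_id.add continuous_const).continuousOn)
      intro s hs
      rw [Set.uIcc_of_le zero_le_one] at hs
      exact Or.inl (by nlinarith [hs.1] : (0:ℝ) < s + h).ne'
    rw [intervalIntegral.integral_eq_sub_of_hasDerivAt hint (hcont.intervalIntegrable)]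
    rw [zero_add]
    ring
  have step1 : (∫ s in (0:ℝ)..1, f s) ≤ ∫ s in Set.Ioc (0:ℝ) 1, g s := by
    rw [intervalIntegral.integral_of_le zero_le_one]
    exact setIntegral_mono_on hfint hgint measurableSet_Ioc hpt
  have step2 : ∫ s in Set.Ioc (0:ℝ) 1, g s = K * ((h ^ (-α) - (1 + h) ^ (-α)) / α) := by
    rw [← intervalIntegral.integral_of_le zero_le_one, hg]
    simp only
    rw [intervalIntegral.integral_const_mul, hint_aux]
  have step3 : K * ((h ^ (-α) - (1 + h) ^ (-α)) / α) ≤ (C₀ / α) ^ p / α * h ^ ((p - 1) * α) := by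
    have h1p : (0:ℝ) ≤ (1 + h) ^ (-α) := Real.rpow_nonneg (by linarith) _
    have : K * ((h ^ (-α) - (1 + h) ^ (-α)) / α) ≤ K * (h ^ (-α) / α) := by
      apply mul_le_mul_of_nonneg_left _ hKpos.le
      gcongr
      linarith
    refine this.trans (le_of_eq ?_)
    rw [hKdef, show (p-1)*α = α*p + -α from by ring, Real.rpow_add hh]
    field_simp
  calc (∫ s in (0:ℝ)..1, f s) ≤ K * ((h ^ (-α) - (1 + h) ^ (-α)) / α) := step1.trans (le_of_eq step2)
    _ ≤ (C₀ / α) ^ p / α * h ^ ((p - 1) * α) := step3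


include hα hα1 hC₀ hzero hderiv hnn hbd in
lemma inner_int {p s : ℝ} (hp : 1 + α < p) (hs : 0 < s) :
    (∫ y in (0:ℝ)..s, |W₀ s - W₀ (s - y)| ^ p * y ^ (-α - 2))
      ≤ (C₀ ^ p * 2 ^ (-(p * α - α - 1)) / (p - α - 1) + (C₀ / α) ^ p * 2 ^ (α + 1))
          * s ^ (p * α - α - 1) := by
  have hp0 : (0:ℝ) < p := by linarith
  have hpα1 : (0:ℝ) < p - α - 1 := by linarith
  have hCα : (0:ℝ) < C₀ / α := div_pos hC₀ hα
  have hs2 : (0:ℝ) < s / 2 := by linarith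
  set B : ℝ := p * α - α - 1 with hB
  set g : ℝ → ℝ := fun y => |W₀ s - W₀ (s - y)| ^ p * y ^ (-α - 2) with hgdef
  have hWm : Measurable W₀ := W_meas W₀ W₀' hzero hderiv
  have hgmeas : Measurable g := by
    apply Measurable.mul
    · exact (meas_rpow_const p).comp
        ((measurable_const.sub (hWm.comp (measurable_const.sub measurable_id))).abs)
    · exact meas_rpow_const (-α - 2)
  have hgnn : ∀ y : ℝ, 0 < y → 0 ≤ g y := fun y hy =>
    mul_nonneg (Real.rpow_nonneg (abs_nonneg _) p) (Real.rpow_nonneg hy.le _)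
  -- piece 1 : on (0, s/2]
  set c₁ : ℝ := (C₀ * (s / 2) ^ (α - 1)) ^ p with hc₁
  have hc₁pos : 0 < c₁ := Real.rpow_pos_of_pos (by positivity) p
  set d₁ : ℝ → ℝ := fun y => c₁ * y ^ (p - α - 2) with hd₁
  have hbound1 : ∀ y ∈ Set.Ioc (0:ℝ) (s/2), g y ≤ d₁ y := by
    intro y hy
    have hy0 : 0 < y := hy.1
    have hsy : 0 < s - y := by linarith [hy.2]
    have hsy2 : s / 2 ≤ s - y := by linarith [hy.2]
    have hΔ0 : 0 ≤ W₀ s - W₀ (s - y) :=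
      sub_nonneg.2 (W_mono W₀ W₀' hderiv hnn hsy (by linarith))
    have hΔ : W₀ s - W₀ (s - y) ≤ C₀ * (s / 2) ^ (α - 1) * y := by
      have h2 := W_incr_lin α C₀ hα1 hC₀ W₀ W₀' hderiv hbd hsy (by linarith : s - y ≤ s)
      have h3 : (s - y) ^ (α - 1) ≤ (s / 2) ^ (α - 1) :=
        Real.rpow_le_rpow_of_nonpos hs2 hsy2 (by linarith)
      calc W₀ s - W₀ (s - y) ≤ C₀ * (s - y) ^ (α - 1) * (s - (s - y)) := h2
        _ = C₀ * (s - y) ^ (α - 1) * y := by ring_nf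
        _ ≤ C₀ * (s / 2) ^ (α - 1) * y := by
            apply mul_le_mul_of_nonneg_right _ hy0.le
            exact mul_le_mul_of_nonneg_left h3 hC₀.le
    have habs : |W₀ s - W₀ (s - y)| ^ p ≤ c₁ * y ^ p := by
      rw [abs_of_nonneg hΔ0, hc₁]
      calc (W₀ s - W₀ (s - y)) ^ p ≤ (C₀ * (s / 2) ^ (α - 1) * y) ^ p :=
            Real.rpow_le_rpow hΔ0 hΔ hp0.le
        _ = (C₀ * (s / 2) ^ (α - 1)) ^ p * y ^ p :=
            Real.mul_rpow (by positivity) hy0.le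
    calc g y ≤ (c₁ * y ^ p) * y ^ (-α - 2) :=
          mul_le_mul_of_nonneg_right habs (Real.rpow_nonneg hy0.le _)
      _ = c₁ * (y ^ p * y ^ (-α - 2)) := by ring
      _ = d₁ y := by
          rw [← Real.rpow_add hy0, hd₁]
          simp only
          rw [show p + (-α - 2) = p - α - 2 from by ring]
  have hd₁int : IntegrableOn d₁ (Set.Ioc (0:ℝ) (s/2)) := by
    have : IntervalIntegrable (fun y : ℝ => y ^ (p - α - 2)) volume 0 (s/2) :=
      intervalIntegral.intervalIntegrable_rpow' (by linarith)
    have h2 := this.const_mul c₁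
    exact (intervalIntegrable_iff_integrableOn_Ioc_of_le hs2.le).1 h2
  have hgint1 : IntegrableOn g (Set.Ioc (0:ℝ) (s/2)) := by
    apply Integrable.mono' hd₁int hgmeas.aestronglyMeasurable.restrict
    filter_upwards [ae_restrict_mem measurableSet_Ioc] with y hy
    rw [Real.norm_eq_abs, abs_of_nonneg (hgnn y hy.1)]
    exact hbound1 y hy
  have hint1 : (∫ y in Set.Ioc (0:ℝ) (s/2), g y) ≤ c₁ * (s/2) ^ (p - α - 1) / (p - α - 1) := by
    have h1 : (∫ y in Set.Ioc (0:ℝ) (s/2), g y) ≤ ∫ y in Set.Ioc (0:ℝ) (s/2), d₁ y :=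
      setIntegral_mono_on hgint1 hd₁int measurableSet_Ioc hbound1
    have h2 : ∫ y in Set.Ioc (0:ℝ) (s/2), d₁ y = c₁ * (s/2) ^ (p - α - 1) / (p - α - 1) := by
      rw [← intervalIntegral.integral_of_le hs2.le, hd₁]
      simp only
      rw [intervalIntegral.integral_const_mul, integral_rpow (Or.inl (by linarith))]
      rw [Real.zero_rpow (by linarith : p - α - 2 + 1 ≠ 0)]
      ring_nf
    linarith
  -- piece 2 : on (s/2, s]
  set c₂ : ℝ := (C₀ / α * s ^ α) ^ p * (s/2) ^ (-α - 2) with hc₂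
  have hc₂pos : 0 < c₂ := by
    apply mul_pos _ (Real.rpow_pos_of_pos hs2 _)
    exact Real.rpow_pos_of_pos (by positivity) p
  have hbound2 : ∀ y ∈ Set.Ioc (s/2) s, y ≠ s → g y ≤ c₂ := by
    intro y hy hne
    have hy0 : 0 < y := lt_trans hs2 hy.1
    have hys : y < s := lt_of_le_of_ne hy.2 hne
    have hsy : 0 < s - y := by linarith
    have hΔ0 : 0 ≤ W₀ s - W₀ (s - y) :=
      sub_nonneg.2 (W_mono W₀ W₀' hderiv hnn hsy (by linarith))
    have hΔ : W₀ s - W₀ (s - y) ≤ C₀ / α * s ^ α := by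
      have h2 := W_incr_rpow α C₀ hα W₀ W₀' hderiv hbd hsy (by linarith : s - y ≤ s)
      have h3 : (0:ℝ) ≤ (s - y) ^ α := Real.rpow_nonneg hsy.le _
      calc W₀ s - W₀ (s - y) ≤ C₀ / α * (s ^ α - (s - y) ^ α) := h2
        _ ≤ C₀ / α * s ^ α := by nlinarith
    have habs : |W₀ s - W₀ (s - y)| ^ p ≤ (C₀ / α * s ^ α) ^ p := by
      rw [abs_of_nonneg hΔ0]
      exact Real.rpow_le_rpow hΔ0 hΔ hp0.le
    have hy2 : y ^ (-α - 2) ≤ (s/2) ^ (-α - 2) :=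
      Real.rpow_le_rpow_of_nonpos hs2 hy.1.le (by linarith)
    calc g y ≤ (C₀ / α * s ^ α) ^ p * y ^ (-α - 2) :=
          mul_le_mul_of_nonneg_right habs (Real.rpow_nonneg hy0.le _)
      _ ≤ c₂ := mul_le_mul_of_nonneg_left hy2 (Real.rpow_nonneg (by positivity) p)
  have hne_ae : ∀ᵐ y : ℝ ∂(volume.restrict (Set.Ioc (s/2) s)), y ≠ s := by
    apply Filter.Eventually.filter_mono (ae_mono Measure.restrict_le_self)
    rw [ae_iff]
    have : {y : ℝ | ¬ y ≠ s} = {s} := by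
      ext y; simp
    rw [this]
    exact measure_singleton s
  have hgint2 : IntegrableOn g (Set.Ioc (s/2) s) := by
    apply Integrable.mono' (integrableOn_const (C := c₂) measure_Ioc_lt_top.ne)
      hgmeas.aestronglyMeasurable.restrict
    filter_upwards [ae_restrict_mem measurableSet_Ioc, hne_ae] with y hy hne
    rw [Real.norm_eq_abs, abs_of_nonneg (hgnn y (lt_trans hs2 hy.1))]
    exact hbound2 y hy hne
  have hint2 : (∫ y in Set.Ioc (s/2) s, g y) ≤ c₂ * (s/2) := by
    have h1 : (∫ y in Set.Ioc (s/2) s, g y) ≤ ∫ _y in Set.Ioc (s/2) s, c₂ := by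
      apply integral_mono_ae hgint2 (integrableOn_const (C := c₂) measure_Ioc_lt_top.ne)
      filter_upwards [ae_restrict_mem measurableSet_Ioc, hne_ae] with y hy hne
      exact hbound2 y hy hne
    have h2 : ∫ _y in Set.Ioc (s/2) s, (c₂:ℝ) = (s - s/2) * c₂ := by
      rw [setIntegral_const, Real.volume_real_Ioc_of_le (by linarith), smul_eq_mul]
    rw [h2] at h1
    have : (s - s/2) * c₂ = c₂ * (s/2) := by ring
    linarith
  -- combine
  have hii1 : IntervalIntegrable g volume 0 (s/2) :=
    (intervalIntegrable_iff_integrableOn_Ioc_of_le hs2.le).2 hgint1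
  have hii2 : IntervalIntegrable g volume (s/2) s :=
    (intervalIntegrable_iff_integrableOn_Ioc_of_le (by linarith)).2 hgint2
  have hsplit : (∫ y in (0:ℝ)..s, g y)
      = (∫ y in (0:ℝ)..(s/2), g y) + ∫ y in (s/2)..s, g y :=
    (intervalIntegral.integral_add_adjacent_intervals hii1 hii2).symm
  have htotal : (∫ y in (0:ℝ)..s, g y)
      ≤ c₁ * (s/2) ^ (p - α - 1) / (p - α - 1) + c₂ * (s/2) := by
    rw [hsplit, intervalIntegral.integral_of_le hs2.le,
      intervalIntegral.integral_of_le (by linarith : s/2 ≤ s)]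
    exact add_le_add hint1 hint2
  refine htotal.trans (le_of_eq ?_)
  -- algebra
  have e1 : c₁ * (s/2) ^ (p - α - 1) = C₀ ^ p * (2:ℝ) ^ (-B) * s ^ B := by
    have h1 : c₁ = C₀ ^ p * (s/2) ^ ((α-1)*p) := by
      rw [hc₁, Real.mul_rpow hC₀.le (Real.rpow_nonneg hs2.le _), ← Real.rpow_mul hs2.le]
    have h2 : (s/2:ℝ) ^ ((α-1)*p) * (s/2) ^ (p - α - 1) = (s/2) ^ B := by
      rw [← Real.rpow_add hs2, hB]
      congr 1
      ring
    have h3 : (s/2:ℝ) ^ B = s ^ B * ((2:ℝ) ^ B)⁻¹ := by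
      rw [Real.div_rpow hs.le (by norm_num : (0:ℝ) ≤ 2), div_eq_mul_inv]
    have h4 : ((2:ℝ) ^ B)⁻¹ = (2:ℝ) ^ (-B) := (Real.rpow_neg (by norm_num) B).symm
    calc c₁ * (s/2) ^ (p - α - 1)
        = C₀ ^ p * ((s/2) ^ ((α-1)*p) * (s/2) ^ (p - α - 1)) := by rw [h1]; ring
      _ = C₀ ^ p * ((s/2) ^ B) := by rw [h2]
      _ = C₀ ^ p * (2:ℝ) ^ (-B) * s ^ B := by rw [h3, ← h4]; ring
  have e2 : c₂ * (s/2) = (C₀ / α) ^ p * (2:ℝ) ^ (α + 1) * s ^ B := by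
    have h4 : (s/2:ℝ) ^ (-α-2) * (s/2) = (s/2) ^ (-α-1) := by
      nth_rewrite 2 [← Real.rpow_one (s/2)]
      rw [← Real.rpow_add hs2]
      congr 1
      ring
    have h5 : (C₀ / α * s ^ α) ^ p = (C₀ / α) ^ p * s ^ (α * p) := by
      rw [Real.mul_rpow hCα.le (Real.rpow_nonneg hs.le _), ← Real.rpow_mul hs.le]
    have h6 : (s/2:ℝ) ^ (-α-1) = s ^ (-α-1) * (2:ℝ) ^ (α+1) := by
      rw [Real.div_rpow hs.le (by norm_num : (0:ℝ) ≤ 2),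
        show (-α-1 : ℝ) = -(α+1) from by ring,
        Real.rpow_neg (by norm_num : (0:ℝ) ≤ (2:ℝ)) (α+1), div_inv_eq_mul,
        show -(α+1) = -α-1 from by ring]
    have h7 : s ^ (α * p) * s ^ (-α-1) = s ^ B := by
      rw [← Real.rpow_add hs, hB]
      congr 1
      ring
    calc c₂ * (s/2) = (C₀ / α * s ^ α) ^ p * ((s/2) ^ (-α-2) * (s/2)) := by
          rw [hc₂]; ring
      _ = (C₀ / α) ^ p * s ^ (α * p) * (s ^ (-α-1) * (2:ℝ) ^ (α+1)) := by
          rw [h4, h5, h6]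
      _ = (C₀ / α) ^ p * (2:ℝ) ^ (α+1) * (s ^ (α * p) * s ^ (-α-1)) := by ring
      _ = (C₀ / α) ^ p * (2:ℝ) ^ (α+1) * s ^ B := by rw [h7]
  rw [e1, e2]
  ring


include hα hα1 hC₀ hzero hderiv hnn hbd in
lemma second_int {p h : ℝ} (hp : 1 + α < p) (hh : 0 < h) :
    (∫ s in (0:ℝ)..h, ∫ y in (0:ℝ)..s, |W₀ s - W₀ (s - y)| ^ p * y ^ (-α - 2))
      ≤ (C₀ ^ p * 2 ^ (-(p * α - α - 1)) / (p - α - 1) + (C₀ / α) ^ p * 2 ^ (α + 1))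
          / ((p - 1) * α) * h ^ ((p - 1) * α) := by
  have hp0 : (0:ℝ) < p := by linarith
  have hCα : (0:ℝ) < C₀ / α := div_pos hC₀ hα
  set B : ℝ := p * α - α - 1 with hB
  have hB1 : (-1:ℝ) < B := by nlinarith
  have hB1' : B + 1 = (p - 1) * α := by rw [hB]; ring
  set A : ℝ := C₀ ^ p * 2 ^ (-B) / (p - α - 1) + (C₀ / α) ^ p * 2 ^ (α + 1) with hA
  have hApos : 0 < A := by
    have h1 : (0:ℝ) < C₀ ^ p * 2 ^ (-B) / (p - α - 1) := by
      apply div_pos (mul_pos (Real.rpow_pos_of_pos hC₀ p) (Real.rpow_pos_of_pos two_pos _))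
      linarith
    have h2 : (0:ℝ) < (C₀ / α) ^ p * 2 ^ (α + 1) :=
      mul_pos (Real.rpow_pos_of_pos hCα p) (Real.rpow_pos_of_pos two_pos _)
    rw [hA]
    linarith
  set F : ℝ → ℝ := fun s => ∫ y in (0:ℝ)..s, |W₀ s - W₀ (s - y)| ^ p * y ^ (-α - 2) with hF
  have hWm : Measurable W₀ := W_meas W₀ W₀' hzero hderiv
  -- measurability of F via joint measurability
  set H : ℝ × ℝ → ℝ := fun q =>
    Set.indicator {q : ℝ × ℝ | 0 < q.2 ∧ q.2 ≤ q.1}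
      (fun q => |W₀ q.1 - W₀ (q.1 - q.2)| ^ p * q.2 ^ (-α - 2)) q with hH
  have hHmeas : Measurable H := by
    apply Measurable.indicator
    · apply Measurable.mul
      · exact (meas_rpow_const p).comp
          (((hWm.comp measurable_fst).sub
            (hWm.comp (measurable_fst.sub measurable_snd))).abs)
      · exact (meas_rpow_const (-α - 2)).comp measurable_snd
    · exact MeasurableSet.inter
        (measurableSet_lt measurable_const measurable_snd)
        (measurableSet_le measurable_snd measurable_fst)
  have hG' : StronglyMeasurable fun s => ∫ y, H (s, y) :=
    hHmeas.stronglyMeasurable.integral_prod_right'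
  have hFeq : ∀ s : ℝ, 0 < s → F s = ∫ y, H (s, y) := by
    intro s hs
    rw [hF]
    simp only
    rw [intervalIntegral.integral_of_le hs.le, ← integral_indicator measurableSet_Ioc]
    refine integral_congr_ae (Filter.Eventually.of_forall fun y => ?_)
    rw [hH]
    simp only
    by_cases hy : y ∈ Set.Ioc (0:ℝ) s
    · rw [Set.indicator_of_mem hy, Set.indicator_of_mem]
      exact ⟨hy.1, hy.2⟩
    · rw [Set.indicator_of_notMem hy, Set.indicator_of_notMem]
      intro hmem
      exact hy ⟨hmem.1, hmem.2⟩
  have hFaesm : AEStronglyMeasurable F (volume.restrict (Set.Ioc (0:ℝ) h)) := by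
    apply AEStronglyMeasurable.congr hG'.aestronglyMeasurable.restrict
    filter_upwards [ae_restrict_mem measurableSet_Ioc] with s hs
    exact (hFeq s hs.1).symm
  have hFnn : ∀ s ∈ Set.Ioc (0:ℝ) h, 0 ≤ F s := by
    intro s hs
    apply intervalIntegral.integral_nonneg hs.1.le
    intro y hy
    exact mul_nonneg (Real.rpow_nonneg (abs_nonneg _) p) (Real.rpow_nonneg hy.1 _)
  have hFle : ∀ s ∈ Set.Ioc (0:ℝ) h, F s ≤ A * s ^ B :=
    fun s hs => inner_int α C₀ hα hα1 hC₀ W₀ W₀' hzero hderiv hnn hbd hp hs.1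
  set d : ℝ → ℝ := fun s => A * s ^ B with hd
  have hdint : IntegrableOn d (Set.Ioc (0:ℝ) h) := by
    have : IntervalIntegrable (fun s : ℝ => s ^ B) volume 0 h :=
      intervalIntegral.intervalIntegrable_rpow' hB1
    exact (intervalIntegrable_iff_integrableOn_Ioc_of_le hh.le).1 (this.const_mul A)
  have hFint : IntegrableOn F (Set.Ioc (0:ℝ) h) := by
    apply Integrable.mono' hdint hFaesm
    filter_upwards [ae_restrict_mem measurableSet_Ioc] with s hs
    rw [Real.norm_eq_abs, abs_of_nonneg (hFnn s hs)]
    exact hFle s hs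
  have step1 : (∫ s in (0:ℝ)..h, F s) ≤ ∫ s in Set.Ioc (0:ℝ) h, d s := by
    rw [intervalIntegral.integral_of_le hh.le]
    exact setIntegral_mono_on hFint hdint measurableSet_Ioc hFle
  have step2 : ∫ s in Set.Ioc (0:ℝ) h, d s = A * (h ^ (B + 1) / (B + 1)) := by
    rw [← intervalIntegral.integral_of_le hh.le, hd]
    simp only
    rw [intervalIntegral.integral_const_mul, integral_rpow (Or.inl hB1),
      Real.zero_rpow (by linarith : B + 1 ≠ 0)]
    ring_nf
  calc (∫ s in (0:ℝ)..h, F s) ≤ A * (h ^ (B + 1) / (B + 1)) := step1.trans (le_of_eq step2)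
    _ = A / ((p - 1) * α) * h ^ ((p - 1) * α) := by rw [hB1']; ring

end
end SFIIB

theorem scale_function_increment_integral_bound
    (α C₀ : ℝ) (hα : 0 < α) (hα1 : α < 1) (hC₀ : 0 < C₀)
    (W₀ W₀' : ℝ → ℝ) (hzero : ∀ x ≤ (0:ℝ), W₀ x = 0)
    (hderiv : ∀ t > (0:ℝ), HasDerivAt W₀ (W₀' t) t)
    (hnn : ∀ t > (0:ℝ), 0 ≤ W₀' t)
    (hbd : ∀ t > (0:ℝ), W₀' t ≤ C₀ * t ^ (α - 1)) :
    ∀ p > 1 + α, ∃ C > (0:ℝ), ∀ h : ℝ, 0 < h → h ≤ 1 →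
      (∫ s in (0:ℝ)..1, |W₀ (s + h) - W₀ s| ^ p * (s + h) ^ (-α - 1))
        + (∫ s in (0:ℝ)..h, ∫ y in (0:ℝ)..s, |W₀ s - W₀ (s - y)| ^ p * y ^ (-α - 2))
      ≤ C * h ^ ((p - 1) * α) := by
  intro p hp
  have hCα : (0:ℝ) < C₀ / α := div_pos hC₀ hα
  have hpα1 : (0:ℝ) < p - α - 1 := by linarith
  have hp1α : (0:ℝ) < (p - 1) * α := by nlinarith
  set C₁ : ℝ := (C₀ / α) ^ p / α with hC₁
  set C₂ : ℝ := (C₀ ^ p * 2 ^ (-(p * α - α - 1)) / (p - α - 1) + (C₀ / α) ^ p * 2 ^ (α + 1))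
      / ((p - 1) * α) with hC₂
  have hC₁pos : 0 < C₁ := div_pos (Real.rpow_pos_of_pos hCα p) hα
  have hC₂pos : 0 < C₂ := by
    apply div_pos _ hp1α
    have h1 : (0:ℝ) < C₀ ^ p * 2 ^ (-(p * α - α - 1)) / (p - α - 1) :=
      div_pos (mul_pos (Real.rpow_pos_of_pos hC₀ p) (Real.rpow_pos_of_pos two_pos _)) hpα1
    have h2 : (0:ℝ) < (C₀ / α) ^ p * 2 ^ (α + 1) :=
      mul_pos (Real.rpow_pos_of_pos hCα p) (Real.rpow_pos_of_pos two_pos _)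
    linarith
  refine ⟨C₁ + C₂, by linarith, fun h hh hh1 => ?_⟩
  have H1 := SFIIB.first_int α C₀ hα hα1 hC₀ W₀ W₀' hzero hderiv hnn hbd hp hh hh1
  have H2 := SFIIB.second_int α C₀ hα hα1 hC₀ W₀ W₀' hzero hderiv hnn hbd hp hh
  rw [add_mul]
  exact add_le_add H1 H2
end

section
/- Let α ∈ (0,1), C₀ > 0, and let W₀ : ℝ → ℝ satisfy W₀(x) = 0 for x ≤ 0 and be twice differentiable on (0,∞) with 0 ≤ W₀'(t) ≤ C₀ t^{α-1} and |W₀''(t)| ≤ C₀ t^{α-2} for all t > 0. Then for every p ≥ 2 there exists a constant C > 0 such that for all h ∈ (0,1], ∫_0^1 ∫_0^s |W₀(s+h) - W₀(s+h-y) - W₀(s) + W₀(s-y)|^p · y^{-α-2} dy ds ≤ C h^{(p-1)α}. -/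
open MeasureTheory
open Set
open scoped NNReal Interval


private lemma mono_aux {f g f' g' : ℝ → ℝ} {a b : ℝ} (hab : a ≤ b)
    (hf : ∀ t ∈ Set.Icc a b, HasDerivAt f (f' t) t)
    (hg : ∀ t ∈ Set.Icc a b, HasDerivAt g (g' t) t)
    (hle : ∀ t ∈ Set.Icc a b, f' t ≤ g' t) :
    f b - f a ≤ g b - g a := by
  have hmono : MonotoneOn (fun t => g t - f t) (Set.Icc a b) := by
    apply monotoneOn_of_deriv_nonneg (convex_Icc a b)
    · intro t ht
      exact ((hg t ht).sub (hf t ht)).continuousAt.continuousWithinAt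
    · intro t ht
      rw [interior_Icc] at ht
      exact ((hg t (Ioo_subset_Icc_self ht)).sub
        (hf t (Ioo_subset_Icc_self ht))).differentiableAt.differentiableWithinAt
    · intro t ht
      rw [interior_Icc] at ht
      rw [show (fun t => g t - f t) = g - f from rfl,
        ((hg t (Ioo_subset_Icc_self ht)).sub (hf t (Ioo_subset_Icc_self ht))).deriv]
      have := hle t (Ioo_subset_Icc_self ht)
      linarith
  have h2 := hmono (Set.left_mem_Icc.2 hab) (Set.right_mem_Icc.2 hab) hab
  simp only [] at h2
  linarith

private lemma mvt_aux {f f' : ℝ → ℝ} {a b M : ℝ} (hab : a ≤ b)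
    (hf : ∀ t ∈ Set.Icc a b, HasDerivAt f (f' t) t)
    (hM : ∀ t ∈ Set.Icc a b, |f' t| ≤ M) :
    |f b - f a| ≤ M * (b - a) := by
  have gup : ∀ t ∈ Set.Icc a b, HasDerivAt (fun x => M * x) M t := by
    intro t _
    simpa using (hasDerivAt_id t).const_mul M
  have gdown : ∀ t ∈ Set.Icc a b, HasDerivAt (fun x => -M * x) (-M) t := by
    intro t _
    simpa using (hasDerivAt_id t).const_mul (-M)
  have h1 : f b - f a ≤ (fun x => M * x) b - (fun x => M * x) a :=
    mono_aux hab hf gup (fun t ht => (abs_le.1 (hM t ht)).2)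
  have h2 : (fun x => -M * x) b - (fun x => -M * x) a ≤ f b - f a :=
    mono_aux hab gdown hf (fun t ht => by
      have := (abs_le.1 (hM t ht)).1; linarith)
  simp only [] at h1 h2
  rw [abs_le]
  constructor <;> nlinarith

private lemma rpow_subadd {α : ℝ} (hα0 : 0 ≤ α) (hα1 : α ≤ 1) {x δ : ℝ} (hx : 0 ≤ x)
    (hδ : 0 ≤ δ) : (x + δ) ^ α ≤ x ^ α + δ ^ α := by
  have h := NNReal.rpow_add_le_add_rpow x.toNNReal δ.toNNReal hα0 hα1
  calc (x + δ) ^ α = ((x.toNNReal + δ.toNNReal : ℝ≥0) : ℝ) ^ α := by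
        rw [NNReal.coe_add, Real.coe_toNNReal x hx, Real.coe_toNNReal δ hδ]
    _ = (((x.toNNReal + δ.toNNReal) ^ α : ℝ≥0) : ℝ) := (NNReal.coe_rpow _ _).symm
    _ ≤ ((x.toNNReal ^ α + δ.toNNReal ^ α : ℝ≥0) : ℝ) := NNReal.coe_le_coe.2 h
    _ = x ^ α + δ ^ α := by
        rw [NNReal.coe_add, NNReal.coe_rpow, NNReal.coe_rpow, Real.coe_toNNReal x hx,
          Real.coe_toNNReal δ hδ]

private lemma key_intble {a b h : ℝ} (hab : -1 < a + b) (hb : 0 ≤ b) (hh0 : 0 < h)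
    (u : ℝ) (hu : 0 ≤ u) :
    IntervalIntegrable (fun s => s ^ a * min s h ^ b) volume 0 u := by
  rw [intervalIntegrable_iff_integrableOn_Ioc_of_le hu]
  apply Integrable.mono' (g := fun s => s ^ (a + b))
      ((intervalIntegral.intervalIntegrable_rpow' hab (a := 0) (b := u)).1)
  · apply ContinuousOn.aestronglyMeasurable _ measurableSet_Ioc
    intro s hs
    exact ((Real.continuousAt_rpow_const s a (Or.inl (ne_of_gt hs.1))).mul
      (((continuous_id.min continuous_const).rpow_const (fun x => Or.inr hb)).continuousAt)).continuousWithinAt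
  · filter_upwards [ae_restrict_mem measurableSet_Ioc] with s hs
    have hs0 : 0 < s := hs.1
    have hmn : (0:ℝ) ≤ min s h := le_min hs0.le hh0.le
    rw [Real.norm_eq_abs, abs_of_nonneg (mul_nonneg (Real.rpow_nonneg hs0.le a)
      (Real.rpow_nonneg hmn b))]
    calc s ^ a * min s h ^ b ≤ s ^ a * s ^ b :=
          mul_le_mul_of_nonneg_left (Real.rpow_le_rpow hmn (min_le_left _ _) hb)
            (Real.rpow_nonneg hs0.le a)
      _ = s ^ (a + b) := (Real.rpow_add hs0 a b).symm

private lemma key_int {a b h : ℝ} (ha : a < -1) (hab : -1 < a + b) (hb : 0 < b)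
    (hh0 : 0 < h) (hh1 : h ≤ 1) :
    (∫ s in (0:ℝ)..1, s ^ a * min s h ^ b) ≤
      (1 / (a + b + 1) + 1 / (-(a + 1))) * h ^ (a + b + 1) := by
  have hab1 : 0 < a + b + 1 := by linarith
  have ha1 : 0 < -(a + 1) := by linarith
  have i1 : IntervalIntegrable (fun s => s ^ a * min s h ^ b) volume 0 h :=
    key_intble hab hb.le hh0 h hh0.le
  have i2 : IntervalIntegrable (fun s => s ^ a * min s h ^ b) volume h 1 := by
    apply ContinuousOn.intervalIntegrable
    intro s hs
    rw [uIcc_of_le hh1] at hs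
    have hs0 : 0 < s := lt_of_lt_of_le hh0 hs.1
    exact ((Real.continuousAt_rpow_const s a (Or.inl hs0.ne')).mul
      (((continuous_id.min continuous_const).rpow_const
        (fun x => Or.inr hb.le)).continuousAt)).continuousWithinAt
  rw [← intervalIntegral.integral_add_adjacent_intervals i1 i2]
  have e1 : (∫ s in (0:ℝ)..h, s ^ a * min s h ^ b) = ∫ s in (0:ℝ)..h, s ^ (a + b) := by
    rw [intervalIntegral.integral_of_le hh0.le, intervalIntegral.integral_of_le hh0.le]
    apply setIntegral_congr_fun measurableSet_Ioc
    intro s hs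
    show s ^ a * min s h ^ b = s ^ (a + b)
    rw [min_eq_left hs.2]
    exact (Real.rpow_add hs.1 a b).symm
  have e2 : (∫ s in h..(1:ℝ), s ^ a * min s h ^ b) = (∫ s in h..(1:ℝ), s ^ a) * h ^ b := by
    rw [← intervalIntegral.integral_mul_const]
    apply intervalIntegral.integral_congr
    intro s hs
    rw [uIcc_of_le hh1] at hs
    show s ^ a * min s h ^ b = s ^ a * h ^ b
    rw [min_eq_right hs.1]
  have h0mem : (0:ℝ) ∉ [[h, 1]] := by
    rw [uIcc_of_le hh1]
    intro hc
    exact absurd hc.1 (not_le.2 hh0)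
  rw [e1, e2, integral_rpow (Or.inl hab), integral_rpow (Or.inr ⟨ne_of_lt ha, h0mem⟩)]
  rw [Real.zero_rpow (ne_of_gt (by linarith : (0:ℝ) < a + b + 1)), Real.one_rpow]
  have hterm2 : (1 - h ^ (a + 1)) / (a + 1) * h ^ b ≤ h ^ (a + b + 1) / (-(a + 1)) := by
    have hone : 1 ≤ h ^ (a + 1) :=
      Real.one_le_rpow_of_pos_of_le_one_of_nonpos hh0 hh1 (by linarith)
    have he : (1 - h ^ (a + 1)) / (a + 1) * h ^ b = (h ^ (a + 1) - 1) * h ^ b / (-(a + 1)) := by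
      rw [div_eq_mul_inv, div_eq_mul_inv, inv_neg]
      ring
    rw [he]
    apply (div_le_div_iff_of_pos_right ha1).2
    calc (h ^ (a + 1) - 1) * h ^ b ≤ h ^ (a + 1) * h ^ b :=
          mul_le_mul_of_nonneg_right (by linarith) (Real.rpow_nonneg hh0.le b)
      _ = h ^ (a + b + 1) := by
          rw [← Real.rpow_add hh0]
          ring_nf
  have r1 : (1 / (a + b + 1) + 1 / (-(a + 1))) * h ^ (a + b + 1) =
      h ^ (a + b + 1) / (a + b + 1) + h ^ (a + b + 1) / (-(a + 1)) := by ring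
  rw [r1, sub_zero]
  exact add_le_add le_rfl hterm2
theorem scale_function_double_increment_integral_bound
    (α C₀ : ℝ) (hα : 0 < α) (hα1 : α < 1) (hC₀ : 0 < C₀)
    (W₀ W₀' W₀'' : ℝ → ℝ) (hzero : ∀ x ≤ (0:ℝ), W₀ x = 0)
    (hderiv : ∀ t > (0:ℝ), HasDerivAt W₀ (W₀' t) t)
    (hderiv2 : ∀ t > (0:ℝ), HasDerivAt W₀' (W₀'' t) t)
    (hnn : ∀ t > (0:ℝ), 0 ≤ W₀' t)
    (hbd : ∀ t > (0:ℝ), W₀' t ≤ C₀ * t ^ (α - 1))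
    (hbd2 : ∀ t > (0:ℝ), |W₀'' t| ≤ C₀ * t ^ (α - 2)) :
    ∀ p ≥ (2:ℝ), ∃ C > (0:ℝ), ∀ h : ℝ, 0 < h → h ≤ 1 →
      (∫ s in (0:ℝ)..1, ∫ y in (0:ℝ)..s,
        |W₀ (s + h) - W₀ (s + h - y) - W₀ s + W₀ (s - y)| ^ p * y ^ (-α - 2))
      ≤ C * h ^ ((p - 1) * α) := by
  intro p hp
  have hp0 : (0:ℝ) < p := by linarith
  have hc1 : 0 < p - α - 1 := by linarith
  have hpa : 0 < p * α - α := by nlinarith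
  have hpap : p * α < p := by
    have := mul_lt_mul_of_pos_left hα1 hp0
    linarith
  have hCα : 0 < C₀ / α := div_pos hC₀ hα
  set A₁ : ℝ := C₀ ^ p * 2 ^ ((2 - α) * p) with hA₁def
  set A₃ : ℝ := (C₀ / α) ^ p * 2 ^ (α + 2) with hA₃def
  have hA₁ : 0 < A₁ := mul_pos (Real.rpow_pos_of_pos hC₀ p) (Real.rpow_pos_of_pos two_pos _)
  have hA₃ : 0 < A₃ := mul_pos (Real.rpow_pos_of_pos hCα p) (Real.rpow_pos_of_pos two_pos _)
  -- increment bound for W₀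
  have hinc : ∀ x δ : ℝ, 0 < x → 0 ≤ δ →
      0 ≤ W₀ (x + δ) - W₀ x ∧ W₀ (x + δ) - W₀ x ≤ C₀ / α * δ ^ α := by
    intro x δ hx hδ
    have hxδ : x ≤ x + δ := by linarith
    have hposIcc : ∀ t ∈ Set.Icc x (x + δ), 0 < t := fun t ht => lt_of_lt_of_le hx ht.1
    constructor
    · have h0 := mono_aux (f := fun _ => (0:ℝ)) (f' := fun _ => (0:ℝ)) (g := W₀) (g' := W₀')
        hxδ (fun t _ => hasDerivAt_const t 0) (fun t ht => hderiv t (hposIcc t ht))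
        (fun t ht => hnn t (hposIcc t ht))
      simpa using h0
    · have hg : ∀ t ∈ Set.Icc x (x + δ),
          HasDerivAt (fun u => C₀ / α * u ^ α) (C₀ * t ^ (α - 1)) t := by
        intro t ht
        have h1 := (Real.hasDerivAt_rpow_const (x := t) (p := α)
          (Or.inl (hposIcc t ht).ne')).const_mul (C₀ / α)
        refine h1.congr_deriv ?_
        field_simp
      have key := mono_aux hxδ (fun t ht => hderiv t (hposIcc t ht)) hg
        (fun t ht => hbd t (hposIcc t ht))
      have key' : W₀ (x + δ) - W₀ x ≤ C₀ / α * (x + δ) ^ α - C₀ / α * x ^ α := key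
      have hsub : (x + δ) ^ α ≤ x ^ α + δ ^ α := rpow_subadd hα.le hα1.le hx.le hδ
      have hmul := mul_le_mul_of_nonneg_left
        (show (x + δ) ^ α - x ^ α ≤ δ ^ α by linarith) hCα.le
      linarith
  -- difference bounds for W₀'
  have hW'diff : ∀ x δ : ℝ, 0 < x → 0 ≤ δ →
      |W₀' (x + δ) - W₀' x| ≤ C₀ * x ^ (α - 1) ∧
        |W₀' (x + δ) - W₀' x| ≤ C₀ * x ^ (α - 2) * δ := by
    intro x δ hx hδ
    constructor
    · have h1 := hnn x hx
      have h2 := hbd x hx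
      have h3 := hnn (x + δ) (by linarith)
      have h4 := hbd (x + δ) (by linarith)
      have h5 : (x + δ) ^ (α - 1) ≤ x ^ (α - 1) :=
        Real.rpow_le_rpow_of_nonpos hx (by linarith) (by linarith)
      have h6 : C₀ * (x + δ) ^ (α - 1) ≤ C₀ * x ^ (α - 1) :=
        mul_le_mul_of_nonneg_left h5 hC₀.le
      rw [abs_le]
      constructor <;> linarith
    · have hM : ∀ t ∈ Set.Icc x (x + δ), |W₀'' t| ≤ C₀ * x ^ (α - 2) := by
        intro t ht
        calc |W₀'' t| ≤ C₀ * t ^ (α - 2) := hbd2 t (lt_of_lt_of_le hx ht.1)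
          _ ≤ C₀ * x ^ (α - 2) := mul_le_mul_of_nonneg_left
              (Real.rpow_le_rpow_of_nonpos hx ht.1 (by linarith)) hC₀.le
      have hres : |W₀' (x + δ) - W₀' x| ≤ C₀ * x ^ (α - 2) * (x + δ - x) :=
        mvt_aux (by linarith : x ≤ x + δ)
          (fun t ht => hderiv2 t (lt_of_lt_of_le hx ht.1)) hM
      rw [show x + δ - x = δ by ring] at hres
      exact hres
  refine ⟨A₁ / (p - α - 1) * (1 / (p * α - p - α - 1 + p + 1) + 1 / (-(p * α - p - α - 1 + 1)))
      + A₃ * (1 / (-α - 1 + p * α + 1) + 1 / (-(-α - 1 + 1))), ?_, ?_⟩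
  · have d1 : 0 < p * α - p - α - 1 + p + 1 := by linarith
    have d2 : 0 < -(p * α - p - α - 1 + 1) := by linarith
    have d3 : 0 < -α - 1 + p * α + 1 := by linarith
    have d4 : 0 < -(-α - 1 + 1) := by linarith
    have := one_div_pos.2 d1
    have := one_div_pos.2 d2
    have := one_div_pos.2 d3
    have := one_div_pos.2 d4
    have h₁ := div_pos hA₁ hc1
    positivity
  intro h hh0 hh1
  -- pointwise bound on the integrand
  have hpt : ∀ s : ℝ, 0 < s → s ≤ 1 → ∀ y : ℝ, 0 < y → y < s →
      |W₀ (s + h) - W₀ (s + h - y) - W₀ s + W₀ (s - y)| ^ p * y ^ (-α - 2) ≤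
        A₁ * s ^ ((α - 2) * p) * min s h ^ p * y ^ (p - α - 2) +
          A₃ * min s h ^ (p * α) * s ^ (-α - 2) := by
    intro s hs0 hs1 y hy0 hys
    have hsy : 0 < s - y := by linarith
    have hshy : 0 < s + h - y := by linarith
    have hmn0 : (0:ℝ) ≤ min s h := le_min hs0.le hh0.le
    have bh : |W₀ (s + h) - W₀ (s + h - y) - W₀ s + W₀ (s - y)| ≤ C₀ / α * h ^ α := by
      obtain ⟨hP0, hP1⟩ := hinc s h hs0 hh0.le
      obtain ⟨hQ0, hQ1⟩ := hinc (s - y) h hsy hh0.le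
      rw [show s - y + h = s + h - y by ring] at hQ0 hQ1
      rw [abs_le]
      constructor <;> linarith
    have by' : |W₀ (s + h) - W₀ (s + h - y) - W₀ s + W₀ (s - y)| ≤ C₀ / α * y ^ α := by
      obtain ⟨hP0, hP1⟩ := hinc (s + h - y) y hshy hy0.le
      obtain ⟨hQ0, hQ1⟩ := hinc (s - y) y hsy hy0.le
      rw [show s + h - y + y = s + h by ring] at hP0 hP1
      rw [show s - y + y = s by ring] at hQ0 hQ1
      rw [abs_le]
      constructor <;> linarith
    have b2 : |W₀ (s + h) - W₀ (s + h - y) - W₀ s + W₀ (s - y)| ≤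
        C₀ * (s - y) ^ (α - 2) * min (s - y) h * y := by
      have hF : ∀ t ∈ Set.Icc (s - y) s, HasDerivAt (fun x => W₀ (x + h) - W₀ x)
          (W₀' (t + h) - W₀' t) t := by
        intro t ht
        have ht0 : 0 < t := lt_of_lt_of_le hsy ht.1
        exact ((hderiv (t + h) (by linarith)).comp_add_const).sub (hderiv t ht0)
      have hM : ∀ t ∈ Set.Icc (s - y) s, |W₀' (t + h) - W₀' t| ≤
          C₀ * (s - y) ^ (α - 2) * min (s - y) h := by
        intro t ht
        have ht0 : 0 < t := lt_of_lt_of_le hsy ht.1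
        rcases le_total (s - y) h with hm | hm
        · rw [min_eq_left hm]
          have h1 := (hW'diff t h ht0 hh0.le).1
          have h5 : t ^ (α - 1) ≤ (s - y) ^ (α - 1) :=
            Real.rpow_le_rpow_of_nonpos hsy ht.1 (by linarith)
          have e : (s - y) ^ (α - 1) = (s - y) ^ (α - 2) * (s - y) := by
            rw [show α - 1 = α - 2 + 1 by ring, Real.rpow_add hsy, Real.rpow_one]
          calc |W₀' (t + h) - W₀' t| ≤ C₀ * t ^ (α - 1) := h1
            _ ≤ C₀ * (s - y) ^ (α - 1) := mul_le_mul_of_nonneg_left h5 hC₀.le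
            _ = C₀ * (s - y) ^ (α - 2) * (s - y) := by rw [e]; ring
        · rw [min_eq_right hm]
          have h1 := (hW'diff t h ht0 hh0.le).2
          have h5 : t ^ (α - 2) ≤ (s - y) ^ (α - 2) :=
            Real.rpow_le_rpow_of_nonpos hsy ht.1 (by linarith)
          calc |W₀' (t + h) - W₀' t| ≤ C₀ * t ^ (α - 2) * h := h1
            _ ≤ C₀ * (s - y) ^ (α - 2) * h :=
                mul_le_mul_of_nonneg_right (mul_le_mul_of_nonneg_left h5 hC₀.le) hh0.le
      have hres : |(W₀ (s + h) - W₀ s) - (W₀ (s - y + h) - W₀ (s - y))| ≤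
          C₀ * (s - y) ^ (α - 2) * min (s - y) h * (s - (s - y)) :=
        mvt_aux (by linarith : s - y ≤ s) hF hM
      rw [show s - y + h = s + h - y by ring, show s - (s - y) = y by ring] at hres
      have hre : W₀ (s + h) - W₀ (s + h - y) - W₀ s + W₀ (s - y) =
          (W₀ (s + h) - W₀ s) - (W₀ (s + h - y) - W₀ (s - y)) := by ring
      rw [hre]
      exact hres
    rcases le_or_gt y (s / 2) with hcase | hcase
    · -- small y regime
      have habs := Real.rpow_le_rpow (abs_nonneg _) b2 hp0.le
      have hmn0' : (0:ℝ) ≤ min (s - y) h := le_min hsy.le hh0.le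
      have hBexp : (C₀ * (s - y) ^ (α - 2) * min (s - y) h * y) ^ p =
          C₀ ^ p * (s - y) ^ ((α - 2) * p) * min (s - y) h ^ p * y ^ p := by
        rw [Real.mul_rpow (mul_nonneg (mul_nonneg hC₀.le (Real.rpow_nonneg hsy.le _)) hmn0')
            hy0.le,
          Real.mul_rpow (mul_nonneg hC₀.le (Real.rpow_nonneg hsy.le _)) hmn0',
          Real.mul_rpow hC₀.le (Real.rpow_nonneg hsy.le _),
          ← Real.rpow_mul hsy.le]
      have hsy2 : s / 2 ≤ s - y := by linarith
      have hs2 : (0:ℝ) < s / 2 := by linarith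
      have hexp_neg : (α - 2) * p ≤ 0 := by nlinarith
      have m1 : (s - y) ^ ((α - 2) * p) ≤ 2 ^ ((2 - α) * p) * s ^ ((α - 2) * p) := by
        have h1 : (s - y) ^ ((α - 2) * p) ≤ (s / 2) ^ ((α - 2) * p) :=
          Real.rpow_le_rpow_of_nonpos hs2 hsy2 hexp_neg
        have h2 : (s / 2) ^ ((α - 2) * p) = 2 ^ ((2 - α) * p) * s ^ ((α - 2) * p) := by
          rw [show s / 2 = s * 2⁻¹ by ring,
            Real.mul_rpow hs0.le (by norm_num : (0:ℝ) ≤ 2⁻¹),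
            Real.inv_rpow (by norm_num : (0:ℝ) ≤ 2),
            ← Real.rpow_neg (by norm_num : (0:ℝ) ≤ 2),
            show -((α - 2) * p) = (2 - α) * p by ring]
          ring
        linarith
      have m2 : min (s - y) h ^ p ≤ min s h ^ p :=
        Real.rpow_le_rpow hmn0' (min_le_min (by linarith) le_rfl) hp0.le
      have m3 : y ^ p * y ^ (-α - 2) = y ^ (p - α - 2) := by
        rw [← Real.rpow_add hy0, show p + (-α - 2) = p - α - 2 by ring]
      have step : |W₀ (s + h) - W₀ (s + h - y) - W₀ s + W₀ (s - y)| ^ p * y ^ (-α - 2) ≤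
          (C₀ ^ p * (2 ^ ((2 - α) * p) * s ^ ((α - 2) * p)) * min s h ^ p * y ^ p) *
            y ^ (-α - 2) := by
        apply mul_le_mul_of_nonneg_right _ (Real.rpow_nonneg hy0.le _)
        rw [hBexp] at habs
        refine habs.trans ?_
        apply mul_le_mul_of_nonneg_right _ (Real.rpow_nonneg hy0.le p)
        exact mul_le_mul (mul_le_mul_of_nonneg_left m1 (Real.rpow_nonneg hC₀.le p)) m2
          (Real.rpow_nonneg hmn0' p)
          (mul_nonneg (Real.rpow_nonneg hC₀.le p)
            (mul_nonneg (Real.rpow_nonneg (by norm_num : (0:ℝ) ≤ 2) _)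
              (Real.rpow_nonneg hs0.le _)))
      refine step.trans ?_
      have eq1 : (C₀ ^ p * (2 ^ ((2 - α) * p) * s ^ ((α - 2) * p)) * min s h ^ p * y ^ p) *
          y ^ (-α - 2) = A₁ * s ^ ((α - 2) * p) * min s h ^ p * y ^ (p - α - 2) := by
        rw [hA₁def, ← m3]
        ring
      rw [eq1]
      exact le_add_of_nonneg_right (mul_nonneg (mul_nonneg hA₃.le (Real.rpow_nonneg hmn0 _))
        (Real.rpow_nonneg hs0.le _))
    · -- large y regime
      have bmin : |W₀ (s + h) - W₀ (s + h - y) - W₀ s + W₀ (s - y)| ≤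
          C₀ / α * min s h ^ α := by
        rcases le_total s h with hm | hm
        · rw [min_eq_left hm]
          have hya : y ^ α ≤ s ^ α := Real.rpow_le_rpow hy0.le hys.le hα.le
          calc |W₀ (s + h) - W₀ (s + h - y) - W₀ s + W₀ (s - y)| ≤ C₀ / α * y ^ α := by'
            _ ≤ C₀ / α * s ^ α := mul_le_mul_of_nonneg_left hya hCα.le
        · rw [min_eq_right hm]
          exact bh
      have hΔp : |W₀ (s + h) - W₀ (s + h - y) - W₀ s + W₀ (s - y)| ^ p ≤
          (C₀ / α) ^ p * min s h ^ (α * p) := by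
        calc |W₀ (s + h) - W₀ (s + h - y) - W₀ s + W₀ (s - y)| ^ p
            ≤ (C₀ / α * min s h ^ α) ^ p :=
              Real.rpow_le_rpow (abs_nonneg _) bmin hp0.le
          _ = (C₀ / α) ^ p * min s h ^ (α * p) := by
              rw [Real.mul_rpow hCα.le (Real.rpow_nonneg hmn0 α), ← Real.rpow_mul hmn0]
      have hy2 : y ^ (-α - 2) ≤ 2 ^ (α + 2) * s ^ (-α - 2) := by
        have h1 : y ^ (-α - 2) ≤ (s / 2) ^ (-α - 2) :=
          Real.rpow_le_rpow_of_nonpos (by linarith) hcase.le (by linarith)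
        have h2 : (s / 2) ^ (-α - 2) = 2 ^ (α + 2) * s ^ (-α - 2) := by
          rw [show s / 2 = s * 2⁻¹ by ring,
            Real.mul_rpow hs0.le (by norm_num : (0:ℝ) ≤ 2⁻¹),
            Real.inv_rpow (by norm_num : (0:ℝ) ≤ 2),
            ← Real.rpow_neg (by norm_num : (0:ℝ) ≤ 2),
            show -(-α - 2) = α + 2 by ring]
          ring
        linarith
      have step : |W₀ (s + h) - W₀ (s + h - y) - W₀ s + W₀ (s - y)| ^ p * y ^ (-α - 2) ≤
          ((C₀ / α) ^ p * min s h ^ (α * p)) * (2 ^ (α + 2) * s ^ (-α - 2)) :=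
        mul_le_mul hΔp hy2 (Real.rpow_nonneg hy0.le _)
          (mul_nonneg (Real.rpow_nonneg hCα.le _) (Real.rpow_nonneg hmn0 _))
      refine step.trans ?_
      have eq1 : ((C₀ / α) ^ p * min s h ^ (α * p)) * (2 ^ (α + 2) * s ^ (-α - 2)) =
          A₃ * min s h ^ (p * α) * s ^ (-α - 2) := by
        rw [hA₃def, show α * p = p * α by ring]
        ring
      rw [eq1]
      exact le_add_of_nonneg_left (mul_nonneg (mul_nonneg
        (mul_nonneg hA₁.le (Real.rpow_nonneg hs0.le _)) (Real.rpow_nonneg hmn0 _))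
        (Real.rpow_nonneg hy0.le _))
  -- inner integral bound
  have hinner : ∀ s : ℝ, 0 < s → s ≤ 1 →
      (∫ y in (0:ℝ)..s,
          |W₀ (s + h) - W₀ (s + h - y) - W₀ s + W₀ (s - y)| ^ p * y ^ (-α - 2)) ≤
        A₁ / (p - α - 1) * (s ^ (p * α - p - α - 1) * min s h ^ p) +
          A₃ * (s ^ (-α - 1) * min s h ^ (p * α)) := by
    intro s hs0 hs1
    have hmn0 : (0:ℝ) ≤ min s h := le_min hs0.le hh0.le
    have hint1 : IntervalIntegrable
        (fun y => A₁ * s ^ ((α - 2) * p) * min s h ^ p * y ^ (p - α - 2)) volume 0 s :=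
      (intervalIntegral.intervalIntegrable_rpow'
        (by linarith : (-1:ℝ) < p - α - 2)).const_mul _
    have hint2 : IntervalIntegrable
        (fun _ : ℝ => A₃ * min s h ^ (p * α) * s ^ (-α - 2)) volume 0 s :=
      intervalIntegrable_const
    have step1 : (∫ y in (0:ℝ)..s,
        |W₀ (s + h) - W₀ (s + h - y) - W₀ s + W₀ (s - y)| ^ p * y ^ (-α - 2)) ≤
        ∫ y in (0:ℝ)..s, (A₁ * s ^ ((α - 2) * p) * min s h ^ p * y ^ (p - α - 2) +
          A₃ * min s h ^ (p * α) * s ^ (-α - 2)) := by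
      rw [intervalIntegral.integral_of_le hs0.le, intervalIntegral.integral_of_le hs0.le]
      apply integral_mono_of_nonneg
      · filter_upwards [ae_restrict_mem measurableSet_Ioc] with y hy
        exact mul_nonneg (Real.rpow_nonneg (abs_nonneg _) p) (Real.rpow_nonneg hy.1.le _)
      · exact (hint1.add hint2).1
      · refine (ae_restrict_congr_set Ioo_ae_eq_Ioc).1 ?_
        filter_upwards [ae_restrict_mem measurableSet_Ioo] with y hy
        exact hpt s hs0 hs1 y hy.1 hy.2
    refine step1.trans ?_
    rw [intervalIntegral.integral_add hint1 hint2, intervalIntegral.integral_const_mul,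
      intervalIntegral.integral_const, integral_rpow (Or.inl (by linarith : (-1:ℝ) < p - α - 2)),
      show p - α - 2 + 1 = p - α - 1 by ring,
      Real.zero_rpow (ne_of_gt hc1)]
    rw [sub_zero, sub_zero, smul_eq_mul]
    apply le_of_eq
    have es1 : s ^ ((α - 2) * p) * s ^ (p - α - 1) = s ^ (p * α - p - α - 1) := by
      rw [← Real.rpow_add hs0, show (α - 2) * p + (p - α - 1) = p * α - p - α - 1 by ring]
    have es2 : s ^ (-α - 2) * s = s ^ (-α - 1) := by
      calc s ^ (-α - 2) * s = s ^ (-α - 2) * s ^ (1:ℝ) := by rw [Real.rpow_one]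
        _ = s ^ (-α - 1) := by
            rw [← Real.rpow_add hs0, show -α - 2 + (1:ℝ) = -α - 1 by ring]
    rw [← es1, ← es2]
    ring
  -- outer integral
  have g1 : IntervalIntegrable (fun s => s ^ (p * α - p - α - 1) * min s h ^ p) volume 0 1 :=
    key_intble (by linarith : (-1:ℝ) < p * α - p - α - 1 + p) hp0.le hh0 1 zero_le_one
  have g2 : IntervalIntegrable (fun s => s ^ (-α - 1) * min s h ^ (p * α)) volume 0 1 :=
    key_intble (by linarith : (-1:ℝ) < -α - 1 + p * α)
      (mul_nonneg hp0.le hα.le) hh0 1 zero_le_one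
  have houter : (∫ s in (0:ℝ)..1, ∫ y in (0:ℝ)..s,
      |W₀ (s + h) - W₀ (s + h - y) - W₀ s + W₀ (s - y)| ^ p * y ^ (-α - 2)) ≤
      ∫ s in (0:ℝ)..1, (A₁ / (p - α - 1) * (s ^ (p * α - p - α - 1) * min s h ^ p) +
        A₃ * (s ^ (-α - 1) * min s h ^ (p * α))) := by
    rw [intervalIntegral.integral_of_le zero_le_one, intervalIntegral.integral_of_le zero_le_one]
    apply integral_mono_of_nonneg
    · filter_upwards [ae_restrict_mem measurableSet_Ioc] with s hs
      apply intervalIntegral.integral_nonneg hs.1.le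
      intro u hu
      exact mul_nonneg (Real.rpow_nonneg (abs_nonneg _) p) (Real.rpow_nonneg hu.1 _)
    · exact ((g1.const_mul _).add (g2.const_mul _)).1
    · filter_upwards [ae_restrict_mem measurableSet_Ioc] with s hs
      exact hinner s hs.1 hs.2
  refine houter.trans ?_
  rw [intervalIntegral.integral_add (g1.const_mul _) (g2.const_mul _),
    intervalIntegral.integral_const_mul, intervalIntegral.integral_const_mul]
  have k1 := key_int (a := p * α - p - α - 1) (b := p) (h := h)
    (by nlinarith) (by linarith) hp0 hh0 hh1
  have k2 := key_int (a := -α - 1) (b := p * α) (h := h)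
    (by linarith) (by linarith) (by nlinarith) hh0 hh1
  have final : A₁ / (p - α - 1) * ∫ s in (0:ℝ)..1, s ^ (p * α - p - α - 1) * min s h ^ p ≤
      A₁ / (p - α - 1) * ((1 / (p * α - p - α - 1 + p + 1) + 1 / (-(p * α - p - α - 1 + 1))) *
        h ^ (p * α - p - α - 1 + p + 1)) :=
    mul_le_mul_of_nonneg_left k1 (div_pos hA₁ hc1).le
  have final2 : A₃ * ∫ s in (0:ℝ)..1, s ^ (-α - 1) * min s h ^ (p * α) ≤
      A₃ * ((1 / (-α - 1 + p * α + 1) + 1 / (-(-α - 1 + 1))) * h ^ (-α - 1 + p * α + 1)) :=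
    mul_le_mul_of_nonneg_left k2 hA₃.le
  refine (add_le_add final final2).trans ?_
  rw [show p * α - p - α - 1 + p + 1 = (p - 1) * α by ring,
    show -α - 1 + p * α + 1 = (p - 1) * α by ring]
  apply le_of_eq
  ring
end

section
/- Let α ∈ (0,1), C₀ > 0, and let W₀ : ℝ → ℝ satisfy W₀(x) = 0 for x ≤ 0 and be differentiable on (0,∞) with 0 ≤ W₀'(t) ≤ C₀ t^{α-1} for all t > 0. Then for every p ≥ 2 there exists a constant C > 0 such that for all h ∈ (0,1], ∫_0^1 ∫_s^{s+h} |W₀(s+h) - W₀(s+h-y) - W₀(s)|^p · y^{-α-2} dy ds ≤ C h^{(p-1)α}. -/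
open MeasureTheory

open Set intervalIntegral


private lemma monoAux {f f' : ℝ → ℝ} {a b : ℝ} (ha : 0 < a) (hab : a ≤ b)
    (hd : ∀ t ∈ Set.Icc a b, HasDerivAt f (f' t) t)
    (h0 : ∀ t ∈ Set.Icc a b, 0 ≤ f' t) : f a ≤ f b := by
  have hm : MonotoneOn f (Set.Icc a b) := by
    apply monotoneOn_of_deriv_nonneg (convex_Icc a b)
    · exact fun t ht => ((hd t ht).continuousAt).continuousWithinAt
    · intro t ht
      exact ((hd t (interior_subset ht)).differentiableAt).differentiableWithinAt
    · intro t ht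
      rw [(hd t (interior_subset ht)).deriv]
      exact h0 t (interior_subset ht)
  exact hm (Set.left_mem_Icc.2 hab) (Set.right_mem_Icc.2 hab) hab

private lemma W_mono {W₀ W₀' : ℝ → ℝ}
    (hderiv : ∀ t > (0:ℝ), HasDerivAt W₀ (W₀' t) t)
    (hnn : ∀ t > (0:ℝ), 0 ≤ W₀' t)
    {a b : ℝ} (ha : 0 < a) (hab : a ≤ b) : W₀ a ≤ W₀ b :=
  monoAux ha hab (fun t ht => hderiv t (lt_of_lt_of_le ha ht.1))
    (fun t ht => hnn t (lt_of_lt_of_le ha ht.1))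

private lemma W_F2 {α C₀ : ℝ} {W₀ W₀' : ℝ → ℝ} (hα : 0 < α)
    (hderiv : ∀ t > (0:ℝ), HasDerivAt W₀ (W₀' t) t)
    (hbd : ∀ t > (0:ℝ), W₀' t ≤ C₀ * t ^ (α - 1))
    {a b : ℝ} (ha : 0 < a) (hab : a ≤ b) :
    W₀ b - W₀ a ≤ C₀/α * (b ^ α - a ^ α) := by
  have key := monoAux (f := fun t => C₀/α * t ^ α - W₀ t)
      (f' := fun t => C₀/α * (α * t ^ (α-1)) - W₀' t) ha hab ?_ ?_
  · 
    have e : C₀/α * (b ^ α - a ^ α) = C₀/α * b ^ α - C₀/α * a ^ α := by ring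
    linarith
  · intro t ht
    have ht0 : 0 < t := lt_of_lt_of_le ha ht.1
    exact ((Real.hasDerivAt_rpow_const (Or.inl ht0.ne')).const_mul (C₀/α)).sub (hderiv t ht0)
  · intro t ht
    have ht0 : 0 < t := lt_of_lt_of_le ha ht.1
    have e : C₀/α * (α * t ^ (α-1)) = C₀ * t ^ (α-1) := by
      field_simp
    have := hbd t ht0
    rw [e]
    linarith

private lemma W_F4 {α C₀ : ℝ} {W₀ W₀' : ℝ → ℝ} (hα1 : α < 1) (hC₀ : 0 < C₀)
    (hderiv : ∀ t > (0:ℝ), HasDerivAt W₀ (W₀' t) t)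
    (hbd : ∀ t > (0:ℝ), W₀' t ≤ C₀ * t ^ (α - 1))
    {a b : ℝ} (ha : 0 < a) (hab : a ≤ b) :
    W₀ b - W₀ a ≤ C₀ * (b - a) * a ^ (α-1) := by
  have key := monoAux (f := fun t => C₀ * a ^ (α-1) * t - W₀ t)
      (f' := fun t => C₀ * a ^ (α-1) - W₀' t) ha hab ?_ ?_
  · 
    have e : C₀ * (b - a) * a ^ (α-1) = C₀ * a ^ (α-1) * b - C₀ * a ^ (α-1) * a := by ring
    linarith
  · intro t ht
    have ht0 : 0 < t := lt_of_lt_of_le ha ht.1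
    have hd := ((hasDerivAt_id t).const_mul (C₀ * a ^ (α-1))).sub (hderiv t ht0)
    rw [mul_one] at hd
    exact hd
  · intro t ht
    have ht0 : 0 < t := lt_of_lt_of_le ha ht.1
    have h1 := hbd t ht0
    have h2 : t ^ (α-1) ≤ a ^ (α-1) :=
      Real.rpow_le_rpow_of_nonpos ha ht.1 (by linarith)
    have h3 := mul_le_mul_of_nonneg_left h2 hC₀.le
    linarith

set_option maxHeartbeats 1600000 in
theorem scale_function_mixed_increment_integral_bound
    (α C₀ : ℝ) (hα : 0 < α) (hα1 : α < 1) (hC₀ : 0 < C₀)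
    (W₀ W₀' : ℝ → ℝ) (hzero : ∀ x ≤ (0:ℝ), W₀ x = 0)
    (hderiv : ∀ t > (0:ℝ), HasDerivAt W₀ (W₀' t) t)
    (hnn : ∀ t > (0:ℝ), 0 ≤ W₀' t)
    (hbd : ∀ t > (0:ℝ), W₀' t ≤ C₀ * t ^ (α - 1)) :
    ∀ p ≥ (2:ℝ), ∃ C > (0:ℝ), ∀ h : ℝ, 0 < h → h ≤ 1 →
      (∫ s in (0:ℝ)..1, ∫ y in s..(s + h),
        |W₀ (s + h) - W₀ (s + h - y) - W₀ s| ^ p * y ^ (-α - 2))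
      ≤ C * h ^ ((p - 1) * α) := by
  intro p hp
  have hp0 : (0:ℝ) ≤ p := by linarith
  have hca : 0 < C₀ / α := div_pos hC₀ hα
  have mono2 : ∀ {a b : ℝ}, 0 < a → a ≤ b → W₀ a ≤ W₀ b :=
    fun ha hab => W_mono hderiv hnn ha hab
  have F2 : ∀ {a b : ℝ}, 0 < a → a ≤ b → W₀ b - W₀ a ≤ C₀/α * (b ^ α - a ^ α) :=
    fun ha hab => W_F2 hα hderiv hbd ha hab
  have F4 : ∀ {a b : ℝ}, 0 < a → a ≤ b → W₀ b - W₀ a ≤ C₀ * (b - a) * a ^ (α-1) :=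
    fun ha hab => W_F4 hα1 hC₀ hderiv hbd ha hab
  set J : ℝ := sInf (W₀ '' Set.Ioc 0 1) with hJdef
  have Jne : (W₀ '' Set.Ioc 0 1).Nonempty := ⟨W₀ 1, 1, ⟨zero_lt_one, le_refl 1⟩, rfl⟩
  have Jbdd : BddBelow (W₀ '' Set.Ioc 0 1) := by
    refine ⟨W₀ 1 - C₀/α, ?_⟩
    rintro x ⟨t, ⟨ht0, ht1⟩, rfl⟩
    have h1 := F2 ht0 ht1
    rw [Real.one_rpow] at h1
    have h2 : 0 ≤ t ^ α := Real.rpow_nonneg ht0.le α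
    nlinarith
  have Jle : ∀ t : ℝ, 0 < t → J ≤ W₀ t := by
    intro t ht
    rcases le_or_gt t 1 with h1 | h1
    · exact csInf_le Jbdd ⟨t, ⟨ht, h1⟩, rfl⟩
    · exact le_trans (csInf_le Jbdd ⟨1, ⟨zero_lt_one, le_rfl⟩, rfl⟩)
        (mono2 zero_lt_one h1.le)
  have Japprox : ∀ ε : ℝ, 0 < ε → ∃ t₀, 0 < t₀ ∧ t₀ ≤ 1 ∧ W₀ t₀ < J + ε := by
    intro ε hε
    obtain ⟨x, hx, hlt⟩ := exists_lt_of_csInf_lt Jne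
      (show sInf (W₀ '' Set.Ioc 0 1) < J + ε by rw [← hJdef]; linarith)
    obtain ⟨t, ⟨ht0, ht1⟩, rfl⟩ := hx
    exact ⟨t, ht0, ht1, hlt⟩
  have Wle : ∀ b : ℝ, 0 < b → W₀ b ≤ J + C₀/α * b ^ α := by
    intro b hb
    by_contra hcon
    push_neg at hcon
    set ε : ℝ := (W₀ b - J - C₀/α * b ^ α) / 2 with hεdef
    have hε : 0 < ε := by simp only [hεdef]; linarith
    obtain ⟨t₀, ht0, ht1, hW⟩ := Japprox ε hε
    set a : ℝ := min t₀ b with hadef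
    have ha0 : 0 < a := lt_min ht0 hb
    have h1 := F2 ha0 (min_le_right t₀ b)
    have h2 : W₀ a ≤ W₀ t₀ := by
      rcases eq_or_lt_of_le (min_le_left t₀ b) with he | hlt
      · exact le_of_eq (by rw [hadef, he])
      · exact mono2 ha0 (min_le_left t₀ b)
    have h3 : 0 ≤ a ^ α := Real.rpow_nonneg ha0.le α
    nlinarith
  have measW : Measurable W₀ := by
    have hV : Monotone (fun x => if x ≤ 0 then J else W₀ x) := by
      intro x y hxy
      rcases le_or_gt x 0 with hx | hx
      · rcases le_or_gt y 0 with hy | hy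
        · simp [hx, hy]
        · simp only [if_pos hx, if_neg (not_le.2 hy)]
          exact Jle y hy
      · have hy : ¬ y ≤ 0 := not_le.2 (lt_of_lt_of_le hx hxy)
        simp only [if_neg (not_le.2 hx), if_neg hy]
        exact mono2 hx hxy
    have he : W₀ = fun x => if x ≤ 0 then 0 else (fun x => if x ≤ 0 then J else W₀ x) x := by
      funext x
      by_cases hx : x ≤ 0 <;> simp [hx, hzero]
    rw [he]
    exact Measurable.ite measurableSet_Iic measurable_const hV.measurable
  clear_value J
  set β : ℝ := (p - 1) * α with hβdef
  have hβ0 : 0 < β := mul_pos (by linarith) hα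
  set γ : ℝ := min β 1 / 2 with hγdef
  have hγ0 : 0 < γ := by
    have := lt_min hβ0 one_pos
    simp only [hγdef]; linarith
  have hγhalf : γ ≤ 1/2 := by
    have := min_le_right β 1
    simp only [hγdef]; linarith
  have hβγ : 0 < β - γ := by
    have := min_le_left β 1
    simp only [hγdef]; linarith
  set K : ℝ := C₀ + 8 * (C₀/α) with hKdef
  have hK : 0 < K := by positivity
  set C₁ : ℝ := C₀ + C₀/α with hC₁def
  have hC₁ : 0 < C₁ := by positivity
  have hCpos : (0:ℝ) < 2 ^ (β+1) * K ^ p / γ + C₁ ^ p / (α+1) := by positivity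
  refine ⟨2 ^ (β+1) * K ^ p / γ + C₁ ^ p / (α+1), hCpos, ?_⟩
  clear_value K C₁
  intro h hh0 hh1
  set g : ℝ → ℝ := fun s => ∫ y in s..(s + h),
      |W₀ (s + h) - W₀ (s + h - y) - W₀ s| ^ p * y ^ (-α - 2) with hgdef
  clear_value g
  by_cases hint : IntervalIntegrable g volume 0 1
  swap
  · rw [intervalIntegral.integral_undef hint]
    exact mul_nonneg hCpos.le (Real.rpow_nonneg hh0.le β)
  -- boundedness of W₀ on [0,2]
  set M₀ : ℝ := |J| + |W₀ 2| with hM₀def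
  have hWbdd : ∀ t : ℝ, 0 ≤ t → t ≤ 2 → |W₀ t| ≤ M₀ := by
    intro t ht0 ht2
    rcases eq_or_lt_of_le ht0 with he | hlt
    · rw [← he, hzero 0 le_rfl, abs_zero]
      positivity
    · have h1 : J ≤ W₀ t := Jle t hlt
      have h2 : W₀ t ≤ W₀ 2 := by
        rcases eq_or_lt_of_le ht2 with he2 | hlt2
        · rw [he2]
        · exact mono2 hlt ht2
      have h3 : -|J| ≤ J := neg_abs_le J
      have h4 : W₀ 2 ≤ |W₀ 2| := le_abs_self _
      rw [abs_le]
      constructor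
      · simp only [hM₀def]; have := abs_nonneg (W₀ 2); linarith
      · simp only [hM₀def]; have := abs_nonneg J; linarith
  have intAux : ∀ s : ℝ, 0 < s → s ≤ 1 → IntervalIntegrable
      (fun y => |W₀ (s + h) - W₀ (s + h - y) - W₀ s| ^ p * y ^ (-α - 2)) volume s (s+h) := by
    intro s hs hs1
    have hmeas : Measurable fun y : ℝ =>
        |W₀ (s + h) - W₀ (s + h - y) - W₀ s| ^ p * y ^ (-α - 2) := by
      have m1 : Measurable fun y : ℝ => W₀ (s + h) - W₀ (s + h - y) - W₀ s :=
        (measurable_const.sub (measW.comp (measurable_const.sub measurable_id))).sub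
          measurable_const
      exact (m1.abs.pow measurable_const).mul (measurable_id.pow measurable_const)
    refine IntervalIntegrable.mono_fun'
      (g := fun _ => (3*M₀+1) ^ p * s ^ (-α - 2)) intervalIntegrable_const
      hmeas.aestronglyMeasurable ?_
    rw [Filter.EventuallyLE, ae_restrict_iff' measurableSet_uIoc]
    refine Filter.Eventually.of_forall ?_
    intro y hy
    rw [Set.uIoc_of_le (by linarith : s ≤ s + h)] at hy
    obtain ⟨hy1, hy2⟩ := hy
    have hy0 : 0 < y := hs.trans hy1
    have hnum : |W₀ (s + h) - W₀ (s + h - y) - W₀ s| ≤ 3*M₀ + 1 := by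
      have b1 : |W₀ (s+h)| ≤ M₀ := hWbdd _ (by linarith) (by linarith)
      have b2 : |W₀ (s+h-y)| ≤ M₀ := hWbdd _ (by linarith) (by linarith)
      have b3 : |W₀ s| ≤ M₀ := hWbdd _ hs.le (by linarith)
      have c1 := abs_le.1 b1
      have c2 := abs_le.1 b2
      have c3 := abs_le.1 b3
      rw [abs_le]
      constructor <;> [skip; skip] <;> [linarith [c1.1, c2.2, c3.2]; linarith [c1.2, c2.1, c3.1]]
    have hyb : y ^ (-α-2) ≤ s ^ (-α-2) :=
      Real.rpow_le_rpow_of_nonpos hs hy1.le (by linarith)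
    have hf0 : 0 ≤ |W₀ (s + h) - W₀ (s + h - y) - W₀ s| ^ p * y ^ (-α - 2) :=
      mul_nonneg (Real.rpow_nonneg (abs_nonneg _) p) (Real.rpow_nonneg hy0.le _)
    rw [Real.norm_eq_abs, abs_of_nonneg hf0]
    have h1 : |W₀ (s + h) - W₀ (s + h - y) - W₀ s| ^ p ≤ (3*M₀+1) ^ p :=
      Real.rpow_le_rpow (abs_nonneg _) hnum hp0
    have hM1 : (0:ℝ) ≤ 3*M₀+1 := by
      have := abs_nonneg J; have := abs_nonneg (W₀ 2); simp only [hM₀def]; linarith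
    exact mul_le_mul h1 hyb (Real.rpow_nonneg hy0.le _) (Real.rpow_nonneg hM1 p)
  rcases eq_or_ne J 0 with hJ0 | hJ0
  · -- main case : W₀ is continuous at 0⁺ with limit 0
    have Wnn : ∀ t : ℝ, 0 ≤ t → 0 ≤ W₀ t := by
      intro t ht
      rcases eq_or_lt_of_le ht with he | hlt
      · rw [← he, hzero 0 le_rfl]
      · have := Jle t hlt; linarith [hJ0 ▸ this]
    have WleC : ∀ b : ℝ, 0 ≤ b → W₀ b ≤ C₀/α * b ^ α := by
      intro b hb
      rcases eq_or_lt_of_le hb with he | hlt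
      · rw [← he, hzero 0 le_rfl]; positivity
      · have h1 := Wle b hlt
        rw [hJ0] at h1
        linarith
    have Nb1 : ∀ s : ℝ, 0 < s → s ≤ h → ∀ y ∈ Set.Icc s (s+h),
        |W₀ (s + h) - W₀ (s + h - y) - W₀ s| ≤ K * y ^ α := by
      intro s hs hsh y hy
      obtain ⟨hy1, hy2⟩ := hy
      have hy0 : 0 < y := lt_of_lt_of_le hs hy1
      have hyα : (0:ℝ) ≤ y ^ α := Real.rpow_nonneg hy0.le α
      have hKca : C₀/α * y ^ α ≤ K * y ^ α := by
        rw [hKdef]; nlinarith [hC₀.le, hca.le]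
      have hCK : C₀ * y ^ α ≤ K * y ^ α := by
        rw [hKdef]; nlinarith [hC₀.le, hca.le]
      rcases le_or_gt y (h/2) with hcase | hcase
      · have hshy : 0 < s + h - y := by linarith
        have hA0 : 0 ≤ W₀ (s+h) - W₀ (s+h-y) :=
          sub_nonneg.2 (mono2 hshy (by linarith))
        have f4 := F4 hshy (by linarith : s + h - y ≤ s + h)
        have e : s + h - (s + h - y) = y := by ring
        rw [e] at f4
        have hb : (s+h-y) ^ (α-1) ≤ (h/2) ^ (α-1) :=
          Real.rpow_le_rpow_of_nonpos (by linarith) (by linarith) (by linarith)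
        have hyy : y * (h/2) ^ (α-1) ≤ y ^ α := by
          have h1 : y ^ (1-α) ≤ (h/2) ^ (1-α) :=
            Real.rpow_le_rpow hy0.le hcase (by linarith)
          have hE : (0:ℝ) ≤ (h/2) ^ (α-1) := Real.rpow_nonneg (by linarith) _
          have h2 : y ^ (1-α) * (h/2) ^ (α-1) ≤ (h/2) ^ (1-α) * (h/2) ^ (α-1) :=
            mul_le_mul_of_nonneg_right h1 hE
          have e2 : (h/2) ^ (1-α) * (h/2) ^ (α-1) = 1 := by
            rw [← Real.rpow_add (by linarith : (0:ℝ) < h/2),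
              show (1-α) + (α-1) = (0:ℝ) by ring, Real.rpow_zero]
          rw [e2] at h2
          have e1 : y ^ α * y ^ (1-α) = y := by
            rw [← Real.rpow_add hy0, show α + (1-α) = (1:ℝ) by ring, Real.rpow_one]
          have e3 : y * ((h/2) ^ (α-1)) = y ^ α * (y ^ (1-α) * (h/2) ^ (α-1)) := by
            rw [← mul_assoc, e1]
          rw [e3]
          have h4 := mul_le_mul_of_nonneg_left h2 hyα
          simpa using h4
        have hAb : W₀ (s+h) - W₀ (s+h-y) ≤ C₀ * y ^ α := by
          have h1 : C₀ * y * (s+h-y) ^ (α-1) ≤ C₀ * y * (h/2) ^ (α-1) :=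
            mul_le_mul_of_nonneg_left hb (by positivity)
          have h2 : C₀ * y * (h/2) ^ (α-1) ≤ C₀ * y ^ α := by
            have := mul_le_mul_of_nonneg_left hyy hC₀.le
            calc C₀ * y * (h/2) ^ (α-1) = C₀ * (y * (h/2) ^ (α-1)) := by ring
              _ ≤ C₀ * y ^ α := this
          linarith
        have hBs : W₀ s ≤ C₀/α * y ^ α := by
          have h1 := WleC s hs.le
          have h2 : s ^ α ≤ y ^ α := Real.rpow_le_rpow hs.le hy1 hα.le
          have h3 := mul_le_mul_of_nonneg_left h2 hca.le
          linarith
        have hB0 : 0 ≤ W₀ s := Wnn s hs.le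
        rw [abs_le]
        constructor
        · linarith
        · linarith
      · have hA'0 : 0 ≤ W₀ (s+h) - W₀ s := sub_nonneg.2 (mono2 hs (by linarith))
        have hB'0 : 0 ≤ W₀ (s+h-y) := Wnn _ (by linarith)
        have hA' : W₀ (s+h) - W₀ s ≤ C₀/α * (2*h) ^ α := by
          have h1 := WleC (s+h) (by linarith)
          have hs0 : 0 ≤ W₀ s := Wnn s hs.le
          have h2 : (s+h) ^ α ≤ (2*h) ^ α :=
            Real.rpow_le_rpow (by linarith) (by linarith) hα.le
          have h3 := mul_le_mul_of_nonneg_left h2 hca.le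
          linarith
        have hB' : W₀ (s+h-y) ≤ C₀/α * (2*h) ^ α := by
          have h1 := WleC (s+h-y) (by linarith)
          have h2 : (s+h-y) ^ α ≤ (2*h) ^ α :=
            Real.rpow_le_rpow (by linarith) (by linarith) hα.le
          have h3 := mul_le_mul_of_nonneg_left h2 hca.le
          linarith
        have h2y : (2*h) ^ α ≤ 4 * y ^ α := by
          have h1 : (2*h) ^ α ≤ (4*y) ^ α :=
            Real.rpow_le_rpow (by linarith) (by linarith) hα.le
          have h2 : (4*y) ^ α = 4 ^ α * y ^ α :=
            Real.mul_rpow (by norm_num) hy0.le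
          have h3 : (4:ℝ) ^ α ≤ 4 ^ (1:ℝ) :=
            Real.rpow_le_rpow_of_exponent_le (by norm_num) hα1.le
          rw [Real.rpow_one] at h3
          nlinarith
        have h4 : C₀/α * (2*h) ^ α ≤ 4 * (C₀/α) * y ^ α := by
          have := mul_le_mul_of_nonneg_left h2y hca.le
          calc C₀/α * (2*h) ^ α ≤ C₀/α * (4 * y ^ α) := this
            _ = 4 * (C₀/α) * y ^ α := by ring
        have hKb : 8 * (C₀/α) * y ^ α ≤ K * y ^ α := by
          rw [hKdef]; nlinarith [hC₀.le]
        rw [abs_le]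
        constructor
        · linarith
        · linarith
    have Nb2 : ∀ s : ℝ, h ≤ s → s ≤ 1 → ∀ y ∈ Set.Icc s (s+h),
        |W₀ (s + h) - W₀ (s + h - y) - W₀ s| ≤ C₁ * h ^ α := by
      intro s hhs hs1 y hy
      obtain ⟨hy1, hy2⟩ := hy
      have hs0 : 0 < s := lt_of_lt_of_le hh0 hhs
      have hA'0 : 0 ≤ W₀ (s+h) - W₀ s := sub_nonneg.2 (mono2 hs0 (by linarith))
      have f4 := F4 hs0 (by linarith : s ≤ s + h)
      have e : s + h - s = h := by ring
      rw [e] at f4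
      have hb : s ^ (α-1) ≤ h ^ (α-1) :=
        Real.rpow_le_rpow_of_nonpos hh0 hhs (by linarith)
      have hhα : h * h ^ (α-1) = h ^ α := by
        have h1 := Real.rpow_add hh0 1 (α-1)
        rw [Real.rpow_one, show (1:ℝ) + (α-1) = α by ring] at h1
        exact h1.symm
      have hA' : W₀ (s+h) - W₀ s ≤ C₀ * h ^ α := by
        have h1 : C₀ * h * s ^ (α-1) ≤ C₀ * h * h ^ (α-1) :=
          mul_le_mul_of_nonneg_left hb (by positivity)
        have h2 : C₀ * h * h ^ (α-1) = C₀ * h ^ α := by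
          rw [mul_assoc, hhα]
        linarith
      have hB'0 : 0 ≤ W₀ (s+h-y) := Wnn _ (by linarith)
      have hB' : W₀ (s+h-y) ≤ C₀/α * h ^ α := by
        have h1 := WleC (s+h-y) (by linarith)
        have h2 : (s+h-y) ^ α ≤ h ^ α :=
          Real.rpow_le_rpow (by linarith) (by linarith) hα.le
        have h3 := mul_le_mul_of_nonneg_left h2 hca.le
        linarith
      have hhα0 : (0:ℝ) ≤ h ^ α := Real.rpow_nonneg hh0.le α
      rw [hC₁def, abs_le]
      constructor
      · nlinarith [mul_nonneg hC₀.le hhα0]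
      · nlinarith [mul_nonneg hca.le hhα0]
    -- interval integrability of the two outer pieces
    have i01 : IntervalIntegrable g volume 0 h := hint.mono_set (by
      rw [Set.uIcc_of_le hh0.le, Set.uIcc_of_le zero_le_one]
      exact Set.Icc_subset_Icc le_rfl hh1)
    have ih1 : IntervalIntegrable g volume h 1 := hint.mono_set (by
      rw [Set.uIcc_of_le hh1, Set.uIcc_of_le zero_le_one]
      exact Set.Icc_subset_Icc hh0.le le_rfl)
    have hsum := intervalIntegral.integral_add_adjacent_intervals i01 ih1
    have hKp : (0:ℝ) < K ^ p := Real.rpow_pos_of_pos hK p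
    have hC₁p : (0:ℝ) < C₁ ^ p := Real.rpow_pos_of_pos hC₁ p
    -- pointwise bound on (0, h]
    have gb1 : ∀ s : ℝ, 0 < s → s ≤ h →
        g s ≤ (K ^ p * (2*h) ^ (β-γ) * 2) * s ^ (γ-1) := by
      intro s hs hsh
      have hs1 : s ≤ 1 := hsh.trans hh1
      have hii := intAux s hs hs1
      have hrint : IntervalIntegrable
          (fun y : ℝ => K ^ p * (2*h) ^ (β-γ) * y ^ (γ-2)) volume s (s+h) := by
        refine ContinuousOn.intervalIntegrable ?_
        refine ContinuousOn.mul continuousOn_const ?_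
        refine ContinuousOn.rpow_const continuousOn_id ?_
        intro x hx
        left
        rw [Set.uIcc_of_le (by linarith : s ≤ s + h)] at hx
        exact ne_of_gt (lt_of_lt_of_le hs hx.1)
      have hpt : ∀ y ∈ Set.Icc s (s+h),
          |W₀ (s + h) - W₀ (s + h - y) - W₀ s| ^ p * y ^ (-α - 2) ≤
            K ^ p * (2*h) ^ (β-γ) * y ^ (γ-2) := by
        intro y hy
        have hy0 : 0 < y := lt_of_lt_of_le hs hy.1
        have hN := Nb1 s hs hsh y hy
        have r1 : |W₀ (s + h) - W₀ (s + h - y) - W₀ s| ^ p ≤ (K * y ^ α) ^ p :=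
          Real.rpow_le_rpow (abs_nonneg _) hN hp0
        have r2 : (K * y ^ α) ^ p = K ^ p * y ^ (α*p) := by
          rw [Real.mul_rpow hK.le (Real.rpow_nonneg hy0.le α), ← Real.rpow_mul hy0.le]
        have r3 : |W₀ (s + h) - W₀ (s + h - y) - W₀ s| ^ p * y ^ (-α - 2) ≤
            K ^ p * y ^ (α*p) * y ^ (-α-2) := by
          have h5 := mul_le_mul_of_nonneg_right r1 (Real.rpow_nonneg hy0.le (-α-2))
          rw [r2] at h5
          exact h5
        have r4 : K ^ p * y ^ (α*p) * y ^ (-α-2) = K ^ p * (y ^ (β-γ) * y ^ (γ-2)) := by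
          rw [mul_assoc, ← Real.rpow_add hy0, ← Real.rpow_add hy0]
          congr 1
          congr 1
          rw [hβdef]; ring
        have r5 : y ^ (β-γ) ≤ (2*h) ^ (β-γ) :=
          Real.rpow_le_rpow hy0.le (by linarith [hy.2] : y ≤ 2*h) hβγ.le
        calc |W₀ (s + h) - W₀ (s + h - y) - W₀ s| ^ p * y ^ (-α - 2)
            ≤ K ^ p * (y ^ (β-γ) * y ^ (γ-2)) := by rw [← r4]; exact r3
          _ ≤ K ^ p * ((2*h) ^ (β-γ) * y ^ (γ-2)) := by
              refine mul_le_mul_of_nonneg_left ?_ (Real.rpow_nonneg hK.le p)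
              exact mul_le_mul_of_nonneg_right r5 (Real.rpow_nonneg hy0.le _)
          _ = K ^ p * (2*h) ^ (β-γ) * y ^ (γ-2) := by ring
      have hmono := intervalIntegral.integral_mono_on (by linarith : s ≤ s + h) hii hrint hpt
      have hci : (∫ y in s..(s+h), K ^ p * (2*h) ^ (β-γ) * y ^ (γ-2))
          = K ^ p * (2*h) ^ (β-γ) * ∫ y in s..(s+h), y ^ (γ-2) :=
        intervalIntegral.integral_const_mul _ _
      have h0not : (0:ℝ) ∉ Set.uIcc s (s+h) := by
        rw [Set.uIcc_of_le (by linarith : s ≤ s + h)]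
        intro hmem
        exact absurd hmem.1 (by linarith)
      have hrp : (∫ y in s..(s+h), y ^ (γ-2)) =
          ((s+h) ^ (γ-1) - s ^ (γ-1)) / (γ-1) := by
        rw [integral_rpow (Or.inr ⟨(by linarith : (γ-2:ℝ) < -1).ne, h0not⟩),
          show (γ-2+1 : ℝ) = γ-1 by ring]
      have hrpb : ((s+h) ^ (γ-1) - s ^ (γ-1)) / (γ-1) ≤ 2 * s ^ (γ-1) := by
        have hU : (0:ℝ) ≤ (s+h) ^ (γ-1) := Real.rpow_nonneg (by linarith) _
        have hT : (0:ℝ) ≤ s ^ (γ-1) := Real.rpow_nonneg hs.le _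
        rw [div_le_iff_of_neg (by linarith : γ - 1 < 0)]
        nlinarith
      have hgs : g s = ∫ y in s..(s+h),
          |W₀ (s + h) - W₀ (s + h - y) - W₀ s| ^ p * y ^ (-α - 2) := by rw [hgdef]
      have hD : (0:ℝ) ≤ K ^ p * (2*h) ^ (β-γ) :=
        mul_nonneg hKp.le (Real.rpow_nonneg (by linarith) _)
      rw [hgs]
      calc (∫ y in s..(s+h), |W₀ (s + h) - W₀ (s + h - y) - W₀ s| ^ p * y ^ (-α - 2))
          ≤ ∫ y in s..(s+h), K ^ p * (2*h) ^ (β-γ) * y ^ (γ-2) := hmono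
        _ = K ^ p * (2*h) ^ (β-γ) * ∫ y in s..(s+h), y ^ (γ-2) := hci
        _ = K ^ p * (2*h) ^ (β-γ) * (((s+h) ^ (γ-1) - s ^ (γ-1)) / (γ-1)) := by rw [hrp]
        _ ≤ K ^ p * (2*h) ^ (β-γ) * (2 * s ^ (γ-1)) := mul_le_mul_of_nonneg_left hrpb hD
        _ = (K ^ p * (2*h) ^ (β-γ) * 2) * s ^ (γ-1) := by ring
    -- outer integral over [0, h]
    have hG1int : IntervalIntegrable
        (fun s : ℝ => (K ^ p * (2*h) ^ (β-γ) * 2) * s ^ (γ-1)) volume 0 h :=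
      (intervalIntegral.intervalIntegrable_rpow' (by linarith : (-1:ℝ) < γ-1)).const_mul _
    have hae : g ≤ᵐ[volume.restrict (Set.Icc 0 h)]
        fun s => (K ^ p * (2*h) ^ (β-γ) * 2) * s ^ (γ-1) := by
      have hne : ∀ᵐ s : ℝ ∂volume, s ≠ 0 := by
        have hset : {a : ℝ | ¬ a ≠ 0} = {0} := by ext a; simp
        rw [ae_iff, hset]
        exact measure_singleton 0
      filter_upwards [ae_restrict_mem measurableSet_Icc, ae_restrict_of_ae hne] with s hsm hs0
      exact gb1 s (lt_of_le_of_ne hsm.1 (Ne.symm hs0)) hsm.2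
    have hp1 : (∫ s in (0:ℝ)..h, g s) ≤ 2 ^ (β+1) * K ^ p / γ * h ^ β := by
      have hstep := intervalIntegral.integral_mono_ae_restrict hh0.le i01 hG1int hae
      have hI : (∫ s in (0:ℝ)..h, (K ^ p * (2*h) ^ (β-γ) * 2) * s ^ (γ-1))
          = (K ^ p * (2*h) ^ (β-γ) * 2) * ((h ^ γ - (0:ℝ) ^ γ) / γ) := by
        rw [intervalIntegral.integral_const_mul,
          integral_rpow (Or.inl (by linarith : (-1:ℝ) < γ-1)),
          show (γ-1+1 : ℝ) = γ by ring]
      rw [hI, Real.zero_rpow hγ0.ne'] at hstep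
      have e2h : (2*h) ^ (β-γ) = 2 ^ (β-γ) * h ^ (β-γ) := Real.mul_rpow (by norm_num) hh0.le
      have e2 : (2:ℝ) ^ (β-γ) ≤ 2 ^ β := Real.rpow_le_rpow_of_exponent_le one_le_two (by linarith)
      have ehh : h ^ (β-γ) * h ^ γ = h ^ β := by
        rw [← Real.rpow_add hh0, show β - γ + γ = β by ring]
      have e2b : (2:ℝ) ^ (β+1) = 2 ^ β * 2 := by
        rw [Real.rpow_add (by norm_num : (0:ℝ) < 2), Real.rpow_one]
      have hhγ : (0:ℝ) < h ^ γ := Real.rpow_pos_of_pos hh0 γ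
      have hhβγ : (0:ℝ) < h ^ (β-γ) := Real.rpow_pos_of_pos hh0 _
      have hfinal : (K ^ p * (2*h) ^ (β-γ) * 2) * ((h ^ γ - 0) / γ) ≤
          2 ^ (β+1) * K ^ p / γ * h ^ β := by
        rw [e2h, e2b]
        have lhs_eq : (K ^ p * (2 ^ (β-γ) * h ^ (β-γ)) * 2) * ((h ^ γ - 0) / γ)
            = (2 * K ^ p / γ) * (2 ^ (β-γ) * h ^ β) := by
          rw [← ehh]; ring
        have hposfac : (0:ℝ) ≤ 2 * K ^ p / γ := by positivity
        have hmul : (2:ℝ) ^ (β-γ) * h ^ β ≤ 2 ^ β * h ^ β :=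
          mul_le_mul_of_nonneg_right e2 (Real.rpow_pos_of_pos hh0 β).le
        calc (K ^ p * (2 ^ (β-γ) * h ^ (β-γ)) * 2) * ((h ^ γ - 0) / γ)
            = (2 * K ^ p / γ) * (2 ^ (β-γ) * h ^ β) := lhs_eq
          _ ≤ (2 * K ^ p / γ) * (2 ^ β * h ^ β) := mul_le_mul_of_nonneg_left hmul hposfac
          _ = 2 ^ β * 2 * K ^ p / γ * h ^ β := by ring
      linarith [hstep, hfinal]
    -- pointwise bound on [h, 1]
    have gb2 : ∀ s : ℝ, h ≤ s → s ≤ 1 →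
        g s ≤ (C₁ ^ p * h ^ (α*p) * h) * s ^ (-α-2) := by
      intro s hhs hs1
      have hs0 : 0 < s := lt_of_lt_of_le hh0 hhs
      have hii := intAux s hs0 hs1
      have hpt : ∀ y ∈ Set.Icc s (s+h),
          |W₀ (s + h) - W₀ (s + h - y) - W₀ s| ^ p * y ^ (-α - 2) ≤
            (C₁ ^ p * h ^ (α*p)) * s ^ (-α-2) := by
        intro y hy
        have hy0 : 0 < y := lt_of_lt_of_le hs0 hy.1
        have hN := Nb2 s hhs hs1 y hy
        have r1 : |W₀ (s + h) - W₀ (s + h - y) - W₀ s| ^ p ≤ (C₁ * h ^ α) ^ p :=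
          Real.rpow_le_rpow (abs_nonneg _) hN hp0
        have r2 : (C₁ * h ^ α) ^ p = C₁ ^ p * h ^ (α*p) := by
          rw [Real.mul_rpow hC₁.le (Real.rpow_nonneg hh0.le α), ← Real.rpow_mul hh0.le]
        have r3 : y ^ (-α-2) ≤ s ^ (-α-2) :=
          Real.rpow_le_rpow_of_nonpos hs0 hy.1 (by linarith)
        calc |W₀ (s + h) - W₀ (s + h - y) - W₀ s| ^ p * y ^ (-α - 2)
            ≤ (C₁ * h ^ α) ^ p * s ^ (-α-2) :=
              mul_le_mul r1 r3 (Real.rpow_nonneg hy0.le _)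
                (Real.rpow_nonneg (mul_nonneg hC₁.le (Real.rpow_nonneg hh0.le α)) p)
          _ = (C₁ ^ p * h ^ (α*p)) * s ^ (-α-2) := by rw [r2]
      have hmono := intervalIntegral.integral_mono_on (by linarith : s ≤ s + h) hii
        intervalIntegrable_const hpt
      rw [intervalIntegral.integral_const, smul_eq_mul] at hmono
      have hgs : g s = ∫ y in s..(s+h),
          |W₀ (s + h) - W₀ (s + h - y) - W₀ s| ^ p * y ^ (-α - 2) := by rw [hgdef]
      rw [hgs]
      calc (∫ y in s..(s+h), |W₀ (s + h) - W₀ (s + h - y) - W₀ s| ^ p * y ^ (-α - 2))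
          ≤ (s + h - s) * ((C₁ ^ p * h ^ (α*p)) * s ^ (-α-2)) := hmono
        _ = (C₁ ^ p * h ^ (α*p) * h) * s ^ (-α-2) := by ring
    have hG2int : IntervalIntegrable
        (fun s : ℝ => (C₁ ^ p * h ^ (α*p) * h) * s ^ (-α-2)) volume h 1 := by
      refine ContinuousOn.intervalIntegrable ?_
      refine ContinuousOn.mul continuousOn_const ?_
      refine ContinuousOn.rpow_const continuousOn_id ?_
      intro x hx
      left
      rw [Set.uIcc_of_le hh1] at hx
      exact ne_of_gt (lt_of_lt_of_le hh0 hx.1)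
    have hp2 : (∫ s in h..(1:ℝ), g s) ≤ C₁ ^ p / (α+1) * h ^ β := by
      have hstep := intervalIntegral.integral_mono_on hh1 ih1 hG2int
        (fun s hs => gb2 s hs.1 hs.2)
      have h0not : (0:ℝ) ∉ Set.uIcc h 1 := by
        rw [Set.uIcc_of_le hh1]
        intro hmem
        exact absurd hmem.1 (by linarith)
      have hI : (∫ s in h..(1:ℝ), (C₁ ^ p * h ^ (α*p) * h) * s ^ (-α-2))
          = (C₁ ^ p * h ^ (α*p) * h) * (((1:ℝ) ^ (-α-1) - h ^ (-α-1)) / (-α-1)) := by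
        rw [intervalIntegral.integral_const_mul,
          integral_rpow (Or.inr ⟨(by linarith : (-α-2:ℝ) < -1).ne, h0not⟩),
          show (-α-2+1 : ℝ) = -α-1 by ring]
      rw [hI, Real.one_rpow] at hstep
      have hXpos : (0:ℝ) < h ^ (-α-1) := Real.rpow_pos_of_pos hh0 _
      have hDpos : (0:ℝ) < C₁ ^ p * h ^ (α*p) * h :=
        mul_pos (mul_pos hC₁p (Real.rpow_pos_of_pos hh0 _)) hh0
      have hquot : ((1:ℝ) - h ^ (-α-1)) / (-α-1) ≤ h ^ (-α-1) / (α+1) := by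
        rw [div_le_iff_of_neg (by linarith : (-α-1:ℝ) < 0)]
        have e : h ^ (-α-1) / (α+1) * (-α-1) = -(h ^ (-α-1)) := by
          field_simp
          ring
        rw [e]
        linarith
      have hfin2 : (C₁ ^ p * h ^ (α*p) * h) * (((1:ℝ) - h ^ (-α-1)) / (-α-1)) ≤
          C₁ ^ p / (α+1) * h ^ β := by
        have step1 : (C₁ ^ p * h ^ (α*p) * h) * (((1:ℝ) - h ^ (-α-1)) / (-α-1)) ≤
            (C₁ ^ p * h ^ (α*p) * h) * (h ^ (-α-1) / (α+1)) :=
          mul_le_mul_of_nonneg_left hquot hDpos.le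
        have ehβ : h ^ (α*p) * h * h ^ (-α-1) = h ^ β := by
          rw [show h ^ (α*p) * h * h ^ (-α-1) =
            h ^ (α*p) * h ^ (1:ℝ) * h ^ (-α-1) by rw [Real.rpow_one],
            ← Real.rpow_add hh0, ← Real.rpow_add hh0, hβdef,
            show α*p + 1 + (-α-1) = (p-1)*α by ring]
        have step2 : (C₁ ^ p * h ^ (α*p) * h) * (h ^ (-α-1) / (α+1)) =
            C₁ ^ p / (α+1) * h ^ β := by
          rw [← ehβ]; ring
        linarith
      linarith [hstep, hfin2]
    -- combine the two pieces
    calc (∫ s in (0:ℝ)..1, g s) = (∫ s in (0:ℝ)..h, g s) + ∫ s in h..(1:ℝ), g s := hsum.symm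
      _ ≤ 2 ^ (β+1) * K ^ p / γ * h ^ β + C₁ ^ p / (α+1) * h ^ β := add_le_add hp1 hp2
      _ = (2 ^ (β+1) * K ^ p / γ + C₁ ^ p / (α+1)) * h ^ β := by ring
  · exfalso
    have hJpos : 0 < |J| := abs_pos.2 hJ0
    obtain ⟨t₀, ht₀0, ht₀1, hWt₀⟩ := Japprox (|J|/2) (by positivity)
    have hhalf : ∀ t : ℝ, 0 < t → t ≤ t₀ → |J|/2 ≤ |W₀ t| := by
      intro t ht htt
      have h1 : J ≤ W₀ t := Jle t ht
      have h2 : W₀ t ≤ W₀ t₀ := by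
        rcases eq_or_lt_of_le htt with he | hlt
        · exact le_of_eq (congrArg W₀ he)
        · exact mono2 ht htt
      rcases hJ0.lt_or_gt with hneg | hpos
      · rw [abs_of_neg hneg] at hWt₀ ⊢
        have hWt : W₀ t < 0 := by linarith
        rw [abs_of_neg hWt]
        linarith
      · rw [abs_of_pos hpos] at hWt₀ ⊢
        have h3 : W₀ t ≤ |W₀ t| := le_abs_self _
        linarith
    have hden : 0 < 8 * C₀ * (h/2) ^ (α-1) := by positivity
    set s₁ : ℝ := min (min t₀ (h/2)) (|J| / (8 * C₀ * (h/2) ^ (α-1))) with hs₁def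
    have hs₁0 : 0 < s₁ := lt_min (lt_min ht₀0 (by linarith)) (div_pos hJpos hden)
    have hs₁t₀ : s₁ ≤ t₀ := le_trans (min_le_left _ _) (min_le_left _ _)
    have hs₁h : s₁ ≤ h/2 := le_trans (min_le_left _ _) (min_le_right _ _)
    have hs₁J : s₁ ≤ |J| / (8 * C₀ * (h/2) ^ (α-1)) := min_le_right _ _
    have hs₁1 : s₁ ≤ 1 := hs₁t₀.trans ht₀1
    set c : ℝ := (|J|/4) ^ p * 2 ^ (-α-2) with hcdef
    have hc : 0 < c := by rw [hcdef]; positivity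
    clear_value s₁ c
    have glower : ∀ s : ℝ, 0 < s → s ≤ s₁ → c * s ^ (-α-1) ≤ g s := by
      intro s hs hss₁
      have hs1 : s ≤ 1 := hss₁.trans hs₁1
      have hsh2 : s ≤ h/2 := hss₁.trans hs₁h
      have key : ∀ y ∈ Set.Icc s (2*s),
          (|J|/4) ^ p * (2*s) ^ (-α-2) ≤
            |W₀ (s + h) - W₀ (s + h - y) - W₀ s| ^ p * y ^ (-α - 2) := by
        intro y hy
        obtain ⟨hy1, hy2⟩ := hy
        have hy0 : 0 < y := lt_of_lt_of_le hs hy1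
        have hshy : 0 < s + h - y := by linarith
        have hA0 : 0 ≤ W₀ (s+h) - W₀ (s+h-y) :=
          sub_nonneg.2 (mono2 hshy (by linarith))
        have hA : W₀ (s+h) - W₀ (s+h-y) ≤ |J|/4 := by
          have f4 := F4 hshy (by linarith : s + h - y ≤ s + h)
          have e : s + h - (s + h - y) = y := by ring
          rw [e] at f4
          have hb : (s+h-y) ^ (α-1) ≤ (h/2) ^ (α-1) :=
            Real.rpow_le_rpow_of_nonpos (by linarith) (by linarith) (by linarith)
          have t1 : 0 ≤ (s+h-y) ^ (α-1) := Real.rpow_nonneg hshy.le _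
          have u1 : C₀ * y * (s+h-y) ^ (α-1) ≤ C₀ * y * (h/2) ^ (α-1) :=
            mul_le_mul_of_nonneg_left hb (by positivity)
          have hX : (0:ℝ) ≤ (h/2) ^ (α-1) := by positivity
          have u2 : C₀ * y * (h/2) ^ (α-1) ≤ C₀ * (2*s) * (h/2) ^ (α-1) := by
            nlinarith
          have h6 : s ≤ |J| / (8 * C₀ * (h/2) ^ (α-1)) := le_trans hss₁ hs₁J
          have h5 : s * (8 * C₀ * (h/2) ^ (α-1)) ≤ |J| := (le_div_iff₀ hden).1 h6
          linarith
        have hB : |J|/2 ≤ |W₀ s| := hhalf s hs (hss₁.trans hs₁t₀)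
        have hAabs : |W₀ (s+h) - W₀ (s+h-y)| ≤ |J|/4 := abs_le.2 ⟨by linarith, hA⟩
        have habs : |W₀ s| - |W₀ (s+h) - W₀ (s+h-y)| ≤
            |W₀ (s+h) - W₀ (s+h-y) - W₀ s| := by
          have h6 := abs_sub_abs_le_abs_sub (W₀ s) (W₀ (s+h) - W₀ (s+h-y))
          rw [abs_sub_comm (W₀ s) (W₀ (s+h) - W₀ (s+h-y))] at h6
          exact h6
        have hnum : |J|/4 ≤ |W₀ (s+h) - W₀ (s+h-y) - W₀ s| := by linarith
        have r1 : (|J|/4) ^ p ≤ |W₀ (s + h) - W₀ (s + h - y) - W₀ s| ^ p :=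
          Real.rpow_le_rpow (by positivity) hnum hp0
        have r2 : (2*s) ^ (-α-2) ≤ y ^ (-α-2) :=
          Real.rpow_le_rpow_of_nonpos hy0 hy2 (by linarith)
        exact mul_le_mul r1 r2 (Real.rpow_nonneg (by linarith) _)
          (Real.rpow_nonneg (abs_nonneg _) p)
      have hii := intAux s hs hs1
      have hsub1 : Set.uIcc s (2*s) ⊆ Set.uIcc s (s+h) := by
        rw [Set.uIcc_of_le (by linarith : s ≤ 2*s), Set.uIcc_of_le (by linarith : s ≤ s+h)]
        exact Set.Icc_subset_Icc le_rfl (by linarith)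
      have hsub2 : Set.uIcc (2*s) (s+h) ⊆ Set.uIcc s (s+h) := by
        rw [Set.uIcc_of_le (by linarith : 2*s ≤ s+h), Set.uIcc_of_le (by linarith : s ≤ s+h)]
        exact Set.Icc_subset_Icc (by linarith) le_rfl
      have hi1 := hii.mono_set hsub1
      have hi2 := hii.mono_set hsub2
      have hsplit := intervalIntegral.integral_add_adjacent_intervals hi1 hi2
      have h2nd : 0 ≤ ∫ y in (2*s)..(s+h),
          |W₀ (s + h) - W₀ (s + h - y) - W₀ s| ^ p * y ^ (-α - 2) := by
        apply intervalIntegral.integral_nonneg (by linarith : 2*s ≤ s+h)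
        intro u hu
        have hu0 : 0 < u := lt_of_lt_of_le (by linarith : (0:ℝ) < 2*s) hu.1
        exact mul_nonneg (Real.rpow_nonneg (abs_nonneg _) p) (Real.rpow_nonneg hu0.le _)
      have h1st : c * s ^ (-α-1) ≤ ∫ y in s..(2*s),
          |W₀ (s + h) - W₀ (s + h - y) - W₀ s| ^ p * y ^ (-α - 2) := by
        have hmono := intervalIntegral.integral_mono_on (by linarith : s ≤ 2*s)
          intervalIntegrable_const hi1 key
        rw [intervalIntegral.integral_const, smul_eq_mul] at hmono
        have e : (2*s - s) * ((|J|/4) ^ p * (2*s) ^ (-α-2)) = c * s ^ (-α-1) := by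
          rw [hcdef, Real.mul_rpow (by norm_num : (0:ℝ) ≤ 2) hs.le]
          rw [show (-α-1 : ℝ) = 1 + (-α-2) by ring, Real.rpow_add hs, Real.rpow_one]
          ring
        rw [e] at hmono
        exact hmono
      have hgs : g s = ∫ y in s..(s + h),
          |W₀ (s + h) - W₀ (s + h - y) - W₀ s| ^ p * y ^ (-α - 2) := by
        rw [hgdef]
      rw [hgs]
      linarith
    have hmono' : IntervalIntegrable g volume 0 s₁ := hint.mono_set (by
      rw [Set.uIcc_of_le hs₁0.le, Set.uIcc_of_le zero_le_one]
      exact Set.Icc_subset_Icc le_rfl hs₁1)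
    have hio : IntegrableOn g (Set.Ioo 0 s₁) volume :=
      (intervalIntegrable_iff_integrableOn_Ioo_of_le hs₁0.le).1 hmono'
    have hcomp : IntegrableOn (fun s : ℝ => c * s ^ (-α-1)) (Set.Ioo 0 s₁) volume := by
      apply Integrable.mono' hio
      · exact ((measurable_id.pow measurable_const).const_mul c).aestronglyMeasurable
      · filter_upwards [ae_restrict_mem measurableSet_Ioo] with s hs'
        obtain ⟨h0s, hss⟩ := hs'
        rw [Real.norm_eq_abs, abs_of_nonneg (by positivity)]
        exact glower s h0s hss.le
    have hrp : IntegrableOn (fun s : ℝ => s ^ (-α-1)) (Set.Ioo 0 s₁) volume := by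
      have h2 := hcomp.const_mul c⁻¹
      have e : (fun s : ℝ => c⁻¹ * (c * s ^ (-α-1))) = fun s : ℝ => s ^ (-α-1) := by
        funext s
        rw [← mul_assoc, inv_mul_cancel₀ hc.ne', one_mul]
      rwa [e] at h2
    have hfin := (integrableOn_Ioo_rpow_iff hs₁0).1 hrp
    linarith
end

section
/- There exists a constant C > 0 such that for all K, T > 0, every f ∈ A_{T,K} and every s ∈ (0,T], |V_α f(s)| ≤ C K² e^{(K/α) s^{α}} s^{α-1}. -/
open MeasureTheory

lemma exp_taylor_bound (z : ℂ) :
    ‖Complex.exp z - 1 - z‖ ≤ 3 * ‖z‖ ^ 2 * Real.exp (‖z‖) := by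
  have hE : (1:ℝ) ≤ Real.exp (‖z‖) := Real.one_le_exp (norm_nonneg z)
  rcases le_or_gt (‖z‖) 1 with h | h
  · have h1 := Complex.norm_exp_sub_one_sub_id_le h
    nlinarith [sq_nonneg (‖z‖)]
  · have h1 : ‖Complex.exp z‖ ≤ Real.exp (‖z‖) := by
      rw [Complex.norm_exp]
      exact Real.exp_le_exp.2 ((Complex.re_le_norm z))
    have h2 : ‖Complex.exp z - 1 - z‖
        ≤ ‖Complex.exp z‖ + 1 + ‖z‖ := by
      calc ‖Complex.exp z - 1 - z‖
          ≤ ‖Complex.exp z - 1‖ + ‖z‖ := by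
            simpa [sub_eq_add_neg] using
              norm_sub_le (Complex.exp z - 1) z
        _ ≤ ‖Complex.exp z‖ + 1 + ‖z‖ := by
            have := norm_sub_le (Complex.exp z) (1:ℂ)
            simpa using add_le_add_right this (‖z‖)
    have ht : 1 < ‖z‖ := h
    set t := ‖z‖ with htdef
    set e := Real.exp (‖z‖) with hedef
    have h5 : (0:ℝ) ≤ (t^2-1)*e := mul_nonneg (by nlinarith) (by linarith)
    have h6 : (0:ℝ) ≤ (t^2-t)*e := mul_nonneg (by nlinarith) (by linarith)
    have q1 : e ≤ t^2*e := by nlinarith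
    have q2 : 1 ≤ t^2*e := by nlinarith
    have q3 : t ≤ t^2*e := by nlinarith
    linarith


/-- The nonlinear operator
`V_α f(t) = ∫_0^∞ (exp(∫_{(t-y)⁺}^t f) - 1 - ∫_{(t-y)⁺}^t f) ν_α(dy)`,
where `ν_α(dy) = (cα(α+1)/Γ(1-α)) y^{-α-2} dy`. -/
noncomputable def Valpha (α c : ℝ) (f : ℝ → ℂ) (t : ℝ) : ℂ :=
  ∫ y in Set.Ioi (0:ℝ),
    (Complex.exp (∫ r in (max (t - y) 0)..t, f r) - 1 - ∫ r in (max (t - y) 0)..t, f r)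
      * ((c * α * (α + 1) / Real.Gamma (1 - α) * y ^ (-α - 2) : ℝ) : ℂ)

set_option maxHeartbeats 1000000 in
theorem Valpha_pointwise_bound (α c : ℝ) (hα : 0 < α) (hα1 : α < 1) (hc : 0 < c) :
    ∃ C > (0:ℝ), ∀ K T : ℝ, 0 < K → 0 < T → ∀ f : ℝ → ℂ, Measurable f →
      (∀ t : ℝ, 0 < t → t ≤ T → ‖f t‖ ≤ K * t ^ (α - 1)) →
      ∀ s : ℝ, 0 < s → s ≤ T →
        ‖Valpha α c f s‖ ≤ C * K ^ 2 * Real.exp (K / α * s ^ α) * s ^ (α - 1) := by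
  have hΓ : 0 < Real.Gamma (1 - α) := Real.Gamma_pos_of_pos (by linarith)
  set Cα := c * α * (α + 1) / Real.Gamma (1 - α) with hCα
  have hCαpos : 0 < Cα := div_pos (by positivity) hΓ
  have hα1' : (0:ℝ) < 1 - α := by linarith
  have hα1'' : (0:ℝ) < α + 1 := by linarith
  refine ⟨3 * Cα * (2:ℝ)^(α+1) * (1/(α^2*(1-α)) + 1/(α^2*(α+1))), by positivity, ?_⟩
  intro K T hK hT f hfm hfb s hs hsT
  set B := K / α * s ^ α with hB
  set E := Real.exp B with hEdef
  have hEpos : 0 < E := Real.exp_pos _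
  have hBpos : 0 < B := by rw [hB]; positivity
  set c₁ := 2 * K / α * s ^ (α-1) with hc₁
  have hc₁pos : 0 < c₁ := by rw [hc₁]; positivity
  have hsc : 0 < s / 2 := half_pos hs
  -- interval integrability of f on [m, s]
  have hfint : ∀ m : ℝ, 0 ≤ m → m ≤ s → IntervalIntegrable f volume m s := by
    intro m hm0 hms
    rw [intervalIntegrable_iff_integrableOn_Ioc_of_le hms]
    have hgint : IntegrableOn (fun r : ℝ => K * r ^ (α-1)) (Set.Ioc m s) :=
      ((intervalIntegral.intervalIntegrable_rpow' (by linarith)).const_mul K).1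
    refine Integrable.mono' hgint (hfm.aestronglyMeasurable.restrict) ?_
    filter_upwards [ae_restrict_mem measurableSet_Ioc] with r hr
    exact hfb r (lt_of_le_of_lt hm0 hr.1) (le_trans hr.2 hsT)
  have hKint : ∀ m : ℝ, IntervalIntegrable (fun r : ℝ => K * r ^ (α-1)) volume m s :=
    fun m => (intervalIntegral.intervalIntegrable_rpow' (by linarith)).const_mul K
  -- a.e. bound lemma
  have hne : ∀ᵐ (r:ℝ) ∂(volume : Measure ℝ), r ≠ 0 := by
    rw [ae_iff]
    simpa [Set.setOf_eq_eq_singleton] using (measure_singleton (0:ℝ))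
  have hfabs : ∀ m : ℝ, 0 ≤ m → m ≤ s →
      ‖∫ r in m..s, f r‖ ≤ ∫ r in m..s, K * r ^ (α-1) := by
    intro m hm0 hms
    have hb : ∀ᵐ r ∂(volume.restrict (Set.Icc m s)), ‖f r‖ ≤ K * r ^ (α-1) := by
      filter_upwards [ae_restrict_mem measurableSet_Icc, ae_restrict_of_ae hne] with r hr hr0
      exact hfb r (lt_of_le_of_ne (le_trans hm0 hr.1) (Ne.symm hr0)) (le_trans hr.2 hsT)
    calc ‖∫ r in m..s, f r‖ ≤ ∫ r in m..s, ‖f r‖ := by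
          exact intervalIntegral.norm_integral_le_integral_norm hms
      _ ≤ ∫ r in m..s, K * r ^ (α-1) :=
          intervalIntegral.integral_mono_ae_restrict hms ((hfint m hm0 hms).norm) (hKint m) hb
  have hval : ∀ m : ℝ, ∫ r in m..s, K * r ^ (α-1) = K * ((s^α - m^α)/α) := by
    intro m
    rw [intervalIntegral.integral_const_mul, integral_rpow (Or.inl (by linarith : (-1:ℝ) < α - 1))]
    rw [show α - 1 + 1 = α by ring]
  -- bound on the inner integral
  have hgb : ∀ y : ℝ, 0 < y →
      ‖∫ r in (max (s - y) 0)..s, f r‖ ≤ (if y ≤ s/2 then c₁ * y else B) := by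
    intro y hy
    have hm0 : (0:ℝ) ≤ max (s - y) 0 := le_max_right _ _
    have hms : max (s - y) 0 ≤ s := max_le (by linarith) hs.le
    by_cases hy2 : y ≤ s/2
    · have hmeq : max (s - y) 0 = s - y := max_eq_left (by linarith)
      rw [if_pos hy2, hmeq]
      have hsy0 : (0:ℝ) ≤ s - y := by linarith
      have hsys : s - y ≤ s := by linarith
      have h1 : (∫ r in (s - y)..s, K * r ^ (α-1)) ≤ ∫ r in (s - y)..s, K * (s/2) ^ (α-1) := by
        refine intervalIntegral.integral_mono_on hsys (hKint _) (intervalIntegrable_const) ?_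
        intro r hr
        have hr2 : s/2 ≤ r := by have := hr.1; linarith
        exact mul_le_mul_of_nonneg_left
          (Real.rpow_le_rpow_of_nonpos hsc hr2 (by linarith)) hK.le
      rw [intervalIntegral.integral_const, smul_eq_mul,
        show s - (s - y) = y by ring] at h1
      have hsp : (0:ℝ) < s^(α-1) := Real.rpow_pos_of_pos hs _
      have h2 : K * (s/2) ^ (α-1) ≤ c₁ := by
        rw [hc₁]
        have e1 : ((s:ℝ)/2) ^ (α-1) = s^(α-1) * 2^(-1*(α-1)) := by
          rw [div_eq_mul_inv, ← Real.rpow_neg_one (2:ℝ),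
            Real.mul_rpow hs.le (Real.rpow_nonneg (by norm_num) _),
            ← Real.rpow_mul (by norm_num : (0:ℝ) ≤ 2)]
        rw [e1, show (-1:ℝ)*(α-1) = 1-α by ring]
        have h2a : (2:ℝ)^(1-α) ≤ 2 := by
          calc (2:ℝ)^(1-α) ≤ 2^(1:ℝ) :=
                Real.rpow_le_rpow_of_exponent_le one_le_two (by linarith)
            _ = 2 := Real.rpow_one 2
        have h2b : K * 2^(1-α) ≤ 2 * K / α := by
          have hx : K * 2^(1-α) ≤ K * 2 := mul_le_mul_of_nonneg_left h2a hK.le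
          have h2c : 2 * K ≤ 2 * K / α := by
            rw [le_div_iff₀ hα]; nlinarith
          linarith
        calc K * (s^(α-1) * 2^(1-α)) = (K * 2^(1-α)) * s^(α-1) := by ring
          _ ≤ (2 * K / α) * s^(α-1) := mul_le_mul_of_nonneg_right h2b hsp.le
      calc ‖∫ r in (s - y)..s, f r‖
          ≤ ∫ r in (s - y)..s, K * r ^ (α-1) := hfabs _ hsy0 hsys
        _ ≤ y * (K * (s/2) ^ (α-1)) := h1
        _ ≤ y * c₁ := mul_le_mul_of_nonneg_left h2 hy.le
        _ = c₁ * y := mul_comm _ _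
    · rw [if_neg hy2]
      calc ‖∫ r in (max (s - y) 0)..s, f r‖
          ≤ ∫ r in (max (s - y) 0)..s, K * r ^ (α-1) := hfabs _ hm0 hms
        _ = K * ((s^α - (max (s - y) 0)^α)/α) := hval _
        _ ≤ B := by
            have h3 : (0:ℝ) ≤ (max (s - y) 0)^α := Real.rpow_nonneg hm0 _
            rw [hB, show K / α * s^α = K * (s^α/α) by ring]
            refine mul_le_mul_of_nonneg_left ?_ hK.le
            gcongr
            linarith
  have hGyB : ∀ y : ℝ, 0 < y → (if y ≤ s/2 then c₁ * y else B) ≤ B := by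
    intro y hy
    by_cases hy2 : y ≤ s/2
    · rw [if_pos hy2]
      have : c₁ * y ≤ c₁ * (s/2) := mul_le_mul_of_nonneg_left hy2 hc₁pos.le
      refine le_trans this ?_
      rw [hc₁, hB]
      have hmul : s^(α-1) * s = s^α := by
        rw [← Real.rpow_add_one hs.ne' (α-1)]; congr 1; ring
      have heq : 2 * K / α * s^(α-1) * (s/2) = K / α * s^α := by
        rw [← hmul]; ring
      exact le_of_eq heq
    · rw [if_neg hy2]
  -- the majorant
  set ψ : ℝ → ℝ := fun y =>
    if y ≤ s/2 then (3*E*Cα*c₁^2) * y^(-α) else (3*E*Cα*B^2) * y^(-α-2) with hψ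
  have hint1 : IntegrableOn ψ (Set.Ioc 0 (s/2)) := by
    refine (((intervalIntegral.intervalIntegrable_rpow'
      (by linarith : (-1:ℝ) < -α)).const_mul (3*E*Cα*c₁^2)).1).congr_fun ?_ measurableSet_Ioc
    intro y hy
    simp only [hψ, if_pos hy.2]
  have hint2 : IntegrableOn ψ (Set.Ioi (s/2)) := by
    have base : IntegrableOn (fun y : ℝ => (3*E*Cα*B^2) * y^(-α-2)) (Set.Ioi (s/2)) :=
      (integrableOn_Ioi_rpow_of_lt (by linarith : -α-2 < -1) hsc).const_mul _
    refine base.congr_fun ?_ measurableSet_Ioi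
    intro y hy
    simp only [hψ, if_neg (not_le.mpr (Set.mem_Ioi.mp hy))]
  have hcover : Set.Ioc (0:ℝ) (s/2) ∪ Set.Ioi (s/2) = Set.Ioi 0 :=
    Set.Ioc_union_Ioi_eq_Ioi hsc.le
  have hψint : IntegrableOn ψ (Set.Ioi (0:ℝ)) := by
    rw [← hcover]; exact hint1.union hint2
  -- pointwise domination
  have hmain : ‖Valpha α c f s‖ ≤ ∫ y in Set.Ioi (0:ℝ), ψ y := by
    unfold Valpha
    rw [← hCα]
    refine norm_integral_le_of_norm_le hψint ?_
    filter_upwards [ae_restrict_mem measurableSet_Ioi] with y hy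
    have hy0 : (0:ℝ) < y := hy
    set g := ∫ r in (max (s - y) 0)..s, f r with hg
    have hGb := hgb y hy0
    have hGB := hGyB y hy0
    have hGy0 : 0 ≤ (if y ≤ s/2 then c₁ * y else B) :=
      le_trans (norm_nonneg g) hGb
    have hw0 : 0 ≤ Cα * y^(-α-2) := mul_nonneg hCαpos.le (Real.rpow_nonneg hy0.le _)
    have hstep : ‖(Complex.exp g - 1 - g) * ((Cα * y ^ (-α - 2) : ℝ) : ℂ)‖
        ≤ 3 * (if y ≤ s/2 then c₁ * y else B)^2 * E * (Cα * y^(-α-2)) := by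
      rw [norm_mul, Complex.norm_real, Real.norm_eq_abs, abs_of_nonneg hw0]
      have h1 := exp_taylor_bound g
      have h2 : Real.exp (‖g‖) ≤ E := by
        rw [hEdef]; exact Real.exp_le_exp.2 (le_trans hGb hGB)
      have h3 : ‖g‖ ^ 2 ≤ (if y ≤ s/2 then c₁ * y else B)^2 := by
        nlinarith [norm_nonneg g]
      calc ‖Complex.exp g - 1 - g‖ * (Cα * y^(-α-2))
          ≤ (3 * ‖g‖ ^ 2 * Real.exp (‖g‖)) * (Cα * y^(-α-2)) :=
            mul_le_mul_of_nonneg_right h1 hw0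
        _ ≤ 3 * (if y ≤ s/2 then c₁ * y else B)^2 * E * (Cα * y^(-α-2)) := by
            refine mul_le_mul_of_nonneg_right ?_ hw0
            have hexp0 : (0:ℝ) < Real.exp (‖g‖) := Real.exp_pos _
            nlinarith [mul_nonneg (sq_nonneg (‖g‖)) (sub_nonneg.mpr h2),
              mul_nonneg hEpos.le (sub_nonneg.mpr h3)]
    refine le_trans hstep ?_
    by_cases hy2 : y ≤ s/2
    · simp only [hψ, if_pos hy2]
      have hyy : y^(2:ℕ) * y^(-α-2) = y^(-α) := by
        rw [← Real.rpow_natCast y 2, ← Real.rpow_add hy0]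
        congr 1; push_cast; ring
      have heq2 : 3 * (c₁ * y)^2 * E * (Cα * y^(-α-2)) = (3*E*Cα*c₁^2) * y^(-α) := by
        rw [← hyy]; ring
      exact le_of_eq heq2
    · simp only [hψ, if_neg hy2]
      exact le_of_eq (by ring)
  -- compute the integral of ψ
  have hsplit : ∫ y in Set.Ioi (0:ℝ), ψ y
      = (∫ y in Set.Ioc (0:ℝ) (s/2), ψ y) + ∫ y in Set.Ioi (s/2), ψ y := by
    rw [← hcover]
    exact setIntegral_union (Set.Ioc_disjoint_Ioi le_rfl) measurableSet_Ioi hint1 hint2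
  have hI1 : ∫ y in Set.Ioc (0:ℝ) (s/2), ψ y = (3*E*Cα*c₁^2) * ((s/2)^(1-α)/(1-α)) := by
    rw [setIntegral_congr_fun measurableSet_Ioc
      (fun y hy => by simp only [hψ, if_pos hy.2] : Set.EqOn ψ (fun y => (3*E*Cα*c₁^2) * y^(-α)) _)]
    rw [← intervalIntegral.integral_of_le hsc.le]
    rw [intervalIntegral.integral_const_mul, integral_rpow (Or.inl (by linarith : (-1:ℝ) < -α))]
    rw [Real.zero_rpow (by intro h; nlinarith : -α + 1 ≠ 0)]
    rw [show -α + 1 = 1 - α by ring]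
    ring
  have hI2 : ∫ y in Set.Ioi (s/2), ψ y = (3*E*Cα*B^2) * ((s/2)^(-α-1)/(α+1)) := by
    rw [setIntegral_congr_fun measurableSet_Ioi
      (fun y hy => by simp only [hψ, if_neg (not_le.mpr (Set.mem_Ioi.mp hy))] :
        Set.EqOn ψ (fun y => (3*E*Cα*B^2) * y^(-α-2)) _)]
    rw [integral_const_mul, integral_Ioi_rpow_of_lt (by linarith : -α-2 < -1) hsc]
    rw [show -α - 2 + 1 = -α - 1 by ring]
    have hne1 : (-α-1 : ℝ) ≠ 0 := by intro h; linarith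
    have hne2 : (α+1 : ℝ) ≠ 0 := by intro h; linarith
    have hneg : -((s/2:ℝ)^(-α-1)) / (-α-1) = (s/2)^(-α-1)/(α+1) := by
      rw [div_eq_div_iff hne1 hne2]; ring
    rw [hneg]
  -- final algebra
  rw [hsplit, hI1, hI2] at hmain
  refine le_trans hmain (le_of_eq ?_)
  have e1 : ((s:ℝ)/2) ^ (1-α) = s^(1-α) * 2^(α-1) := by
    rw [div_eq_mul_inv, ← Real.rpow_neg_one (2:ℝ),
      Real.mul_rpow hs.le (Real.rpow_nonneg (by norm_num) _),
      ← Real.rpow_mul (by norm_num : (0:ℝ) ≤ 2),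
      show (-1:ℝ) * (1-α) = α-1 by ring]
  have e2 : ((s:ℝ)/2) ^ (-α-1) = s^(-α-1) * 2^(α+1) := by
    rw [div_eq_mul_inv, ← Real.rpow_neg_one (2:ℝ),
      Real.mul_rpow hs.le (Real.rpow_nonneg (by norm_num) _),
      ← Real.rpow_mul (by norm_num : (0:ℝ) ≤ 2),
      show (-1:ℝ) * (-α-1) = α+1 by ring]
  have p1 : s^(α-1) * s^(α-1) * s^(1-α) = s^(α-1) := by
    rw [← Real.rpow_add hs, ← Real.rpow_add hs]; congr 1; ring
  have p2 : s^α * s^α * s^(-α-1) = s^(α-1) := by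
    rw [← Real.rpow_add hs, ← Real.rpow_add hs]; congr 1; ring
  have r3 : (2:ℝ)^(α+1) = 4 * 2^(α-1) := by
    rw [show α+1 = 2+(α-1) by ring, Real.rpow_add (by norm_num : (0:ℝ) < 2),
      Real.rpow_two]
    norm_num
  rw [hc₁, hB, e1, e2]
  have lhs_eq : 3*E*Cα*(2*K/α*s^(α-1))^2 * (s^(1-α) * 2^(α-1)/(1-α))
      + 3*E*Cα*(K/α*s^α)^2 * (s^(-α-1) * 2^(α+1)/(α+1))
      = 3*E*Cα*(2*K/α)^2*2^(α-1)/(1-α) * (s^(α-1)*s^(α-1)*s^(1-α))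
      + 3*E*Cα*(K/α)^2*2^(α+1)/(α+1) * (s^α*s^α*s^(-α-1)) := by ring
  rw [lhs_eq, p1, p2, r3]
  field_simp
  ring
end
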